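/- arXiv:1209.4985 — 5 statements merged into one kernel-verified Lean document; each statement's English description precedes it below -/
import Mathlib

section
/- For every real 0 < ε ≤ 1 and all integers k, ℓ, q with k ≥ 2 and ℓ, q ≥ 1 there exists an integer n with the following property: if N is a finite subset of ℕ with |N| ≥ n and F is a family of subsets of [k]^{<ℕ} with |F| = q, then there exists a subset L of N with |L| = ℓ such that F is (ε, L)-regular. -/
/-- A word over `k`: a finite sequence with values in `[k]`. -/
abbrev Word (k : ℕ) := List (Fin k)

/-- The density `dens_{[k]^n}(A) = |A ∩ [k]^n| / k^n`. -/
noncomputable def dens (k n : ℕ) (A : Set (Word k)) : ℝ :=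
  (Set.ncard {x ∈ A | x.length = n} : ℝ) / (k : ℝ) ^ n

/-- The density, in `[k]^{{0,…,n-1} ∖ I}`, of the section of `A ∩ [k]^n` at the located
word `y ∈ [k]^I` (a located word on `I` is encoded by a function `ℕ → Fin k`, only the
values on `I` being relevant): namely
`|{x ∈ A : |x| = n and x(i) = y(i) for all i ∈ I}| / k^{n - |I|}`. -/
noncomputable def secDens (k n : ℕ) (I : Finset ℕ) (y : ℕ → Fin k) (A : Set (Word k)) : ℝ :=
  (Set.ncard {x ∈ A | x.length = n ∧ ∀ i ∈ I, x[i]? = some (y i)} : ℝ) /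
    (k : ℝ) ^ (n - I.card)

/-- A family `F` of subsets of `[k]^{<ℕ}` is `(ε, L)`-regular. -/
def RegularFamily (k : ℕ) (ε : ℝ) (L : Finset ℕ) (F : Finset (Set (Word k))) : Prop :=
  ∀ A ∈ F, ∀ n ∈ L, ∀ I : Finset ℕ, I ⊆ L.filter (· < n) → ∀ y : ℕ → Fin k,
    |secDens k n I y A - dens k n A| ≤ ε


namespace RegLemma

open Finset

variable {k : ℕ}


variable {k : ℕ}

/-- number of `b ∈ B` agreeing with `y` on `I`. -/
def cnt {n : ℕ} (B : Finset (Fin n → Fin k)) (I : Finset (Fin n)) (y : Fin n → Fin k) : ℕ :=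
  (B.filter (fun b => ∀ i ∈ I, b i = y i)).card

lemma card_fiber {n : ℕ} (I : Finset (Fin n)) (b : Fin n → Fin k) :
    (univ.filter (fun x : Fin n → Fin k => ∀ i ∈ I, b i = x i)).card = k ^ (n - I.card) := by
  have h1 : univ.filter (fun x : Fin n → Fin k => ∀ i ∈ I, b i = x i)
      = Fintype.piFinset (fun i => if i ∈ I then ({b i} : Finset (Fin k)) else univ) := by
    ext x
    simp only [mem_filter, mem_univ, true_and, Fintype.mem_piFinset]
    constructor
    · intro h i
      by_cases hi : i ∈ I <;> simp [hi, h i]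
    · intro h i hi
      have := h i; simp only [hi, if_true, mem_singleton] at this; exact this.symm
  rw [h1, Fintype.card_piFinset]
  have h2 : ∀ i : Fin n, (if i ∈ I then ({b i} : Finset (Fin k)) else univ).card
      = if i ∈ I then 1 else k := by
    intro i; by_cases hi : i ∈ I <;> simp [hi]
  simp only [h2]
  rw [← Finset.prod_filter_mul_prod_filter_not univ (· ∈ I)]
  have h3 : univ.filter (fun i : Fin n => i ∈ I) = I := by ext i; simp
  have h4 : (univ.filter (fun i : Fin n => ¬ i ∈ I)).card = n - I.card := by
    rw [Finset.filter_not, Finset.card_sdiff_of_subset (by rw [h3]; exact subset_univ I), h3]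
    simp
  have h5 : (∏ i ∈ univ.filter (fun i : Fin n => i ∈ I), (if i ∈ I then 1 else k)) = 1 := by
    apply Finset.prod_eq_one
    intro i hi
    simp [(mem_filter.mp hi).2]
  have h6 : (∏ i ∈ univ.filter (fun i : Fin n => ¬ i ∈ I), (if i ∈ I then 1 else k)) = k ^ (n - I.card) := by
    rw [Finset.prod_congr rfl (fun i hi => by simp [(mem_filter.mp hi).2] : ∀ i ∈ univ.filter (fun i : Fin n => ¬ i ∈ I), (if i ∈ I then 1 else k) = k), Finset.prod_const, h4]
  rw [h5, h6, one_mul]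

lemma cnt_eq_sum {n : ℕ} (B : Finset (Fin n → Fin k)) (I : Finset (Fin n)) (y : Fin n → Fin k) :
    cnt B I y = ∑ b ∈ B, if (∀ i ∈ I, b i = y i) then 1 else 0 := by
  rw [cnt, Finset.card_filter]

lemma sum_cnt {n : ℕ} (B : Finset (Fin n → Fin k)) (I : Finset (Fin n)) :
    ∑ x : Fin n → Fin k, cnt B I x = B.card * k ^ (n - I.card) := by
  simp only [cnt_eq_sum]
  rw [Finset.sum_comm]
  have : ∀ b ∈ B, (∑ x : Fin n → Fin k, if (∀ i ∈ I, b i = x i) then 1 else 0) = k ^ (n - I.card) := by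
    intro b _
    rw [← Finset.card_filter]
    exact card_fiber I b
  rw [Finset.sum_congr rfl this, Finset.sum_const, smul_eq_mul]

lemma sum_cnt_sq {n : ℕ} (B : Finset (Fin n → Fin k)) (I : Finset (Fin n)) :
    ∑ x : Fin n → Fin k, (cnt B I x) ^ 2 = k ^ (n - I.card) * ∑ b ∈ B, cnt B I b := by
  have key : ∀ b b' : Fin n → Fin k,
      (∑ x : Fin n → Fin k, if (∀ i ∈ I, b i = x i) ∧ (∀ i ∈ I, b' i = x i) then 1 else 0)
      = if (∀ i ∈ I, b i = b' i) then k ^ (n - I.card) else 0 := by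
    intro b b'
    by_cases h : ∀ i ∈ I, b i = b' i
    · rw [if_pos h, ← Finset.card_filter, ← card_fiber I b]
      congr 1
      apply Finset.filter_congr
      intro x _
      constructor
      · exact fun hx => hx.1
      · intro hx; exact ⟨hx, fun i hi => (h i hi).symm.trans (hx i hi)⟩
    · rw [if_neg h]
      push_neg at h
      obtain ⟨i₀, hi₀, hne⟩ := h
      rw [Finset.sum_eq_zero]
      intro x _
      rw [if_neg]
      rintro ⟨h1, h2⟩
      exact hne ((h1 i₀ hi₀).trans (h2 i₀ hi₀).symm)
  calc ∑ x : Fin n → Fin k, (cnt B I x) ^ 2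
      = ∑ x : Fin n → Fin k, ∑ b ∈ B, ∑ b' ∈ B,
          if (∀ i ∈ I, b i = x i) ∧ (∀ i ∈ I, b' i = x i) then 1 else 0 := by
        apply Finset.sum_congr rfl
        intro x _
        rw [sq, cnt_eq_sum, Finset.sum_mul_sum]
        apply Finset.sum_congr rfl; intro b _
        apply Finset.sum_congr rfl; intro b' _
        split_ifs with h1 h2 h3 <;> tauto
    _ = ∑ b ∈ B, ∑ b' ∈ B, ∑ x : Fin n → Fin k,
          if (∀ i ∈ I, b i = x i) ∧ (∀ i ∈ I, b' i = x i) then 1 else 0 := by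
        rw [Finset.sum_comm]
        apply Finset.sum_congr rfl
        intro b _
        rw [Finset.sum_comm]
    _ = ∑ b ∈ B, ∑ b' ∈ B, if (∀ i ∈ I, b i = b' i) then k ^ (n - I.card) else 0 := by
        apply Finset.sum_congr rfl; intro b _
        apply Finset.sum_congr rfl; intro b' _
        exact key b b'
    _ = k ^ (n - I.card) * ∑ b' ∈ B, cnt B I b' := by
        rw [Finset.mul_sum, Finset.sum_comm]
        apply Finset.sum_congr rfl; intro b' _
        rw [cnt_eq_sum, Finset.mul_sum]
        apply Finset.sum_congr rfl; intro b _
        split_ifs <;> simp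

lemma cnt_congr {n : ℕ} (B : Finset (Fin n → Fin k)) (I : Finset (Fin n))
    {x y : Fin n → Fin k} (h : ∀ i ∈ I, x i = y i) : cnt B I x = cnt B I y := by
  unfold cnt
  congr 1
  apply Finset.filter_congr
  intro b _
  constructor
  · intro hb i hi; rw [hb i hi, h i hi]
  · intro hb i hi; rw [hb i hi, ← h i hi]



set_option linter.unusedSectionVars false

/-- deviation of the section density from the global density -/
noncomputable def pdev {n : ℕ} (B : Finset (Fin n → Fin k)) (I : Finset (Fin n))
    (x : Fin n → Fin k) : ℝ :=
  (cnt B I x : ℝ) / (k : ℝ) ^ (n - I.card) - (B.card : ℝ) / (k : ℝ) ^ n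

section assume_sums
variable {n : ℕ} (hk : 1 ≤ k)

lemma card_univ_fun : (Fintype.card (Fin n → Fin k)) = k ^ n := by
  simp [Fintype.card_fun]

include hk

lemma sum_pdev (B : Finset (Fin n → Fin k)) (I : Finset (Fin n))
    (hs : ∑ x : Fin n → Fin k, cnt B I x = B.card * k ^ (n - I.card)) :
    ∑ x : Fin n → Fin k, pdev B I x = 0 := by
  have hκ : ((k : ℝ) ^ (n - I.card)) ≠ 0 := by positivity
  have hK : ((k : ℝ) ^ n) ≠ 0 := by positivity
  simp only [pdev, Finset.sum_sub_distrib, Finset.sum_const, card_univ, card_univ_fun,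
    nsmul_eq_mul]
  rw [← Finset.sum_div, ← Nat.cast_sum, hs]
  push_cast
  field_simp
  ring

/-- product splitting for functions depending on disjoint coordinate sets -/
lemma sum_mul_eq_of_disjoint (I J : Finset (Fin n)) (hd : Disjoint I J)
    (F G : (Fin n → Fin k) → ℝ)
    (hF : ∀ x x' : Fin n → Fin k, (∀ i ∈ I, x i = x' i) → F x = F x')
    (hG : ∀ x x' : Fin n → Fin k, (∀ j ∈ J, x j = x' j) → G x = G x') :
    (∑ x : Fin n → Fin k, F x * G x) * (k : ℝ) ^ n
      = (∑ x : Fin n → Fin k, F x) * (∑ x : Fin n → Fin k, G x) := by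
  classical
  have σinv : Function.Involutive
      (fun p : (Fin n → Fin k) × (Fin n → Fin k) =>
        ((fun i => if i ∈ I then p.1 i else p.2 i : Fin n → Fin k),
         (fun i => if i ∈ I then p.2 i else p.1 i : Fin n → Fin k))) := by
    intro p
    ext i <;> by_cases hi : i ∈ I <;> simp [hi]
  set σ := fun p : (Fin n → Fin k) × (Fin n → Fin k) =>
        ((fun i => if i ∈ I then p.1 i else p.2 i : Fin n → Fin k),
         (fun i => if i ∈ I then p.2 i else p.1 i : Fin n → Fin k)) with hσ
  have hbij : Function.Bijective σ := σinv.bijective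
  have step1 : (∑ x : Fin n → Fin k, F x) * (∑ x : Fin n → Fin k, G x)
      = ∑ p : (Fin n → Fin k) × (Fin n → Fin k), F p.1 * G p.2 := by
    rw [Finset.sum_mul_sum, ← Finset.sum_product']
    rfl
  have step2 : ∑ p : (Fin n → Fin k) × (Fin n → Fin k), F p.1 * G p.2
      = ∑ p : (Fin n → Fin k) × (Fin n → Fin k), F (σ p).1 * G (σ p).2 :=
    (Fintype.sum_bijective σ hbij _ _ (fun p => rfl)).symm
  have step3 : ∀ p : (Fin n → Fin k) × (Fin n → Fin k),
      F (σ p).1 * G (σ p).2 = F p.1 * G p.1 := by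
    intro p
    have hf : F (σ p).1 = F p.1 := by
      apply hF
      intro i hi
      simp [hσ, hi]
    have hg : G (σ p).2 = G p.1 := by
      apply hG
      intro j hj
      have : j ∉ I := fun hj' => (Finset.disjoint_left.mp hd hj') hj
      simp [hσ, this]
    rw [hf, hg]
  rw [step1, step2, Finset.sum_congr rfl (fun p _ => step3 p)]
  rw [Fintype.sum_prod_type]
  have hconst : ∀ x : Fin n → Fin k, (∑ _z : Fin n → Fin k, F x * G x) = (k:ℝ)^n * (F x * G x) := by
    intro x
    rw [Finset.sum_const, card_univ, card_univ_fun, nsmul_eq_mul]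
    push_cast
    ring
  rw [Finset.sum_congr rfl (fun x _ => hconst x), ← Finset.mul_sum]
  ring

end assume_sums


lemma pdev_congr {n : ℕ} (B : Finset (Fin n → Fin k)) (I : Finset (Fin n))
    {x y : Fin n → Fin k} (h : ∀ i ∈ I, x i = y i) : pdev B I x = pdev B I y := by
  unfold pdev
  rw [cnt_congr B I h]

section real_core
variable {n : ℕ} (hk : 1 ≤ k)
include hk

lemma kpow_ne {e : ℕ} : ((k:ℝ)) ^ e ≠ 0 := by
  have : (0:ℝ) < (k:ℝ) := by exact_mod_cast Nat.lt_of_lt_of_le Nat.zero_lt_one hk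
  positivity

lemma sum_pdev' (B : Finset (Fin n → Fin k)) (I : Finset (Fin n)) :
    ∑ x : Fin n → Fin k, pdev B I x = 0 :=
  sum_pdev hk B I (sum_cnt B I)

lemma pdev_orth (B : Finset (Fin n → Fin k)) {I J : Finset (Fin n)} (hd : Disjoint I J) :
    ∑ x : Fin n → Fin k, pdev B I x * pdev B J x = 0 := by
  have h := sum_mul_eq_of_disjoint hk I J hd (pdev B I) (pdev B J)
    (fun x x' hx => pdev_congr B I hx) (fun x x' hx => pdev_congr B J hx)
  rw [sum_pdev' hk B I, sum_pdev' hk B J, zero_mul] at h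
  have hK : ((k:ℝ)) ^ n ≠ 0 := kpow_ne hk
  exact (mul_eq_zero.mp h).resolve_right hK

lemma sum_dev_mul_pdev (B : Finset (Fin n → Fin k)) (I : Finset (Fin n)) :
    ∑ x : Fin n → Fin k, ((if x ∈ B then (1:ℝ) else 0) - (B.card : ℝ) / (k:ℝ)^n) * pdev B I x
      = ∑ x : Fin n → Fin k, (pdev B I x)^2 := by
  set κ : ℝ := (k:ℝ) ^ (n - I.card) with hκdef
  set K : ℝ := (k:ℝ) ^ n with hKdef
  set C : ℝ := (B.card : ℝ) with hCdef
  set P : ℝ := ∑ b ∈ B, (cnt B I b : ℝ) with hPdef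
  have hκ : κ ≠ 0 := kpow_ne hk
  have hK : K ≠ 0 := kpow_ne hk
  have e1 : ∑ x : Fin n → Fin k, (cnt B I x : ℝ) = C * κ := by
    rw [← Nat.cast_sum, sum_cnt]
    push_cast
    rfl
  have e3 : ∑ x : Fin n → Fin k, (cnt B I x : ℝ)^2 = κ * P := by
    have := sum_cnt_sq B I
    calc ∑ x : Fin n → Fin k, (cnt B I x : ℝ)^2
        = ((∑ x : Fin n → Fin k, (cnt B I x)^2 : ℕ) : ℝ) := by push_cast; rfl
      _ = ((k ^ (n - I.card) * ∑ b ∈ B, cnt B I b : ℕ) : ℝ) := by rw [this]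
      _ = κ * P := by push_cast; rfl
  have e2 : ∑ x : Fin n → Fin k, (if x ∈ B then (1:ℝ) else 0) * (cnt B I x : ℝ) = P := by
    have hb : ∀ x : Fin n → Fin k, (if x ∈ B then (1:ℝ) else 0) * (cnt B I x : ℝ)
        = if x ∈ B then (cnt B I x : ℝ) else 0 := by
      intro x; split_ifs <;> simp
    rw [Finset.sum_congr rfl (fun x _ => hb x), Finset.sum_ite_mem, Finset.univ_inter]
  -- ∑ χ x * pdev = P/κ - (C/K)*C
  have e4 : ∑ x : Fin n → Fin k, (if x ∈ B then (1:ℝ) else 0) = C := by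
    rw [Finset.sum_ite_mem, Finset.univ_inter, Finset.sum_const, nsmul_eq_mul, mul_one]
  have hA : ∑ x : Fin n → Fin k, (if x ∈ B then (1:ℝ) else 0) * pdev B I x
      = P / κ - C / K * C := by
    have : ∀ x : Fin n → Fin k, (if x ∈ B then (1:ℝ) else 0) * pdev B I x
        = ((if x ∈ B then (1:ℝ) else 0) * (cnt B I x : ℝ)) / κ
          - (C / K) * (if x ∈ B then (1:ℝ) else 0) := by
      intro x
      simp only [pdev, ← hκdef, ← hKdef, ← hCdef]
      ring
    rw [Finset.sum_congr rfl (fun x _ => this x), Finset.sum_sub_distrib, ← Finset.sum_div,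
      ← Finset.mul_sum, e2, e4]
  have hB : ∑ x : Fin n → Fin k, (cnt B I x : ℝ) * pdev B I x = P - C / K * (C * κ) := by
    have : ∀ x : Fin n → Fin k, (cnt B I x : ℝ) * pdev B I x
        = (cnt B I x : ℝ)^2 / κ - (C / K) * (cnt B I x : ℝ) := by
      intro x
      simp only [pdev, ← hκdef, ← hKdef, ← hCdef]
      ring
    rw [Finset.sum_congr rfl (fun x _ => this x), Finset.sum_sub_distrib, ← Finset.sum_div,
      ← Finset.mul_sum, e1, e3]
    field_simp
  have hg2 : ∑ x : Fin n → Fin k, (pdev B I x)^2 = P / κ - C / K * C := by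
    have : ∀ x : Fin n → Fin k, (pdev B I x)^2
        = ((cnt B I x : ℝ) * pdev B I x) / κ - (C / K) * pdev B I x := by
      intro x
      simp only [pdev, ← hκdef, ← hKdef, ← hCdef]
      ring
    rw [Finset.sum_congr rfl (fun x _ => this x), Finset.sum_sub_distrib, ← Finset.sum_div,
      ← Finset.mul_sum, hB, sum_pdev' hk B I, mul_zero, sub_zero]
    field_simp
  have hL : ∑ x : Fin n → Fin k, ((if x ∈ B then (1:ℝ) else 0) - C / K) * pdev B I x
      = P / κ - C / K * C := by
    have : ∀ x : Fin n → Fin k, ((if x ∈ B then (1:ℝ) else 0) - C / K) * pdev B I x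
        = (if x ∈ B then (1:ℝ) else 0) * pdev B I x - (C / K) * pdev B I x := by
      intro x; ring
    rw [Finset.sum_congr rfl (fun x _ => this x), Finset.sum_sub_distrib, ← Finset.mul_sum,
      sum_pdev' hk B I, mul_zero, sub_zero, hA]
  rw [hL, hg2]

lemma bessel (B : Finset (Fin n → Fin k)) (𝔉 : Finset (Finset (Fin n)))
    (hdisj : ∀ I ∈ 𝔉, ∀ J ∈ 𝔉, I ≠ J → Disjoint I J) :
    ∑ I ∈ 𝔉, ∑ x : Fin n → Fin k, (pdev B I x)^2 ≤ (k:ℝ)^n := by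
  classical
  set d : ℝ := (B.card : ℝ) / (k:ℝ)^n with hd
  set χ : (Fin n → Fin k) → ℝ := fun x => if x ∈ B then (1:ℝ) else 0 with hχ
  set Q : Finset (Fin n) → ℝ := fun I => ∑ x : Fin n → Fin k, (pdev B I x)^2 with hQ
  have h1 : ∑ x : Fin n → Fin k, (χ x - d) * (∑ I ∈ 𝔉, pdev B I x) = ∑ I ∈ 𝔉, Q I := by
    have : ∀ x : Fin n → Fin k, (χ x - d) * (∑ I ∈ 𝔉, pdev B I x)
        = ∑ I ∈ 𝔉, (χ x - d) * pdev B I x := fun x => Finset.mul_sum _ _ _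
    rw [Finset.sum_congr rfl (fun x _ => this x), Finset.sum_comm]
    exact Finset.sum_congr rfl (fun I _ => sum_dev_mul_pdev hk B I)
  have h2 : ∑ x : Fin n → Fin k, (∑ I ∈ 𝔉, pdev B I x)^2 = ∑ I ∈ 𝔉, Q I := by
    have e : ∀ x : Fin n → Fin k, (∑ I ∈ 𝔉, pdev B I x)^2
        = ∑ I ∈ 𝔉, ∑ J ∈ 𝔉, pdev B I x * pdev B J x := by
      intro x
      rw [sq, Finset.sum_mul_sum]
    rw [Finset.sum_congr rfl (fun x _ => e x), Finset.sum_comm]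
    apply Finset.sum_congr rfl
    intro I hI
    rw [Finset.sum_comm]
    have : ∀ J ∈ 𝔉, (∑ x : Fin n → Fin k, pdev B I x * pdev B J x)
        = if J = I then Q I else 0 := by
      intro J hJ
      by_cases hIJ : J = I
      · subst hIJ
        simp only [if_pos rfl, hQ]
        exact Finset.sum_congr rfl (fun x _ => by rw [sq])
      · rw [if_neg hIJ]
        exact pdev_orth hk B (hdisj I hI J hJ (fun h => hIJ h.symm))
    rw [Finset.sum_congr rfl this, Finset.sum_ite_eq' 𝔉 I (fun _ => Q I), if_pos hI]
  have h3 : ∑ x : Fin n → Fin k, (χ x - d)^2 ≤ (k:ℝ)^n := by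
    have hd0 : 0 ≤ d := by
      rw [hd]
      have : (0:ℝ) < (k:ℝ)^n := by
        have : (0:ℝ) < (k:ℝ) := by exact_mod_cast Nat.lt_of_lt_of_le Nat.zero_lt_one hk
        positivity
      positivity
    have hd1 : d ≤ 1 := by
      rw [hd, div_le_one]
      · have h5 : B.card ≤ k ^ n := le_trans (Finset.card_le_univ B)
          (le_of_eq (by simp [Fintype.card_fun]))
        exact_mod_cast h5
      · have : (0:ℝ) < (k:ℝ) := by exact_mod_cast Nat.lt_of_lt_of_le Nat.zero_lt_one hk
        positivity
    have hpt : ∀ x : Fin n → Fin k, (χ x - d)^2 ≤ 1 := by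
      intro x
      by_cases hx : x ∈ B
      · have : χ x = 1 := by simp [hχ, hx]
        rw [this]; nlinarith
      · have : χ x = 0 := by simp [hχ, hx]
        rw [this]; nlinarith
    calc ∑ x : Fin n → Fin k, (χ x - d)^2 ≤ ∑ _x : Fin n → Fin k, (1:ℝ) :=
          Finset.sum_le_sum (fun x _ => hpt x)
      _ = (k:ℝ)^n := by
          rw [Finset.sum_const, card_univ, card_univ_fun, nsmul_eq_mul, mul_one]
          push_cast
          rfl
  have key : (0:ℝ) ≤ ∑ x : Fin n → Fin k, (χ x - d - ∑ I ∈ 𝔉, pdev B I x)^2 :=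
    Finset.sum_nonneg (fun x _ => sq_nonneg _)
  have expand : ∑ x : Fin n → Fin k, (χ x - d - ∑ I ∈ 𝔉, pdev B I x)^2
      = ∑ x : Fin n → Fin k, (χ x - d)^2
        - 2 * ∑ x : Fin n → Fin k, (χ x - d) * (∑ I ∈ 𝔉, pdev B I x)
        + ∑ x : Fin n → Fin k, (∑ I ∈ 𝔉, pdev B I x)^2 := by
    have pt : ∀ x : Fin n → Fin k, (χ x - d - ∑ I ∈ 𝔉, pdev B I x)^2
        = (χ x - d)^2 - 2*((χ x - d) * ∑ I ∈ 𝔉, pdev B I x)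
          + (∑ I ∈ 𝔉, pdev B I x)^2 := fun x => by ring
    rw [Finset.sum_congr rfl (fun x _ => pt x), Finset.sum_add_distrib,
      Finset.sum_sub_distrib, ← Finset.mul_sum]
  rw [expand, h1, h2] at key
  linarith

lemma bad_family_bound {n ℓ : ℕ} {ε : ℝ} (hε : 0 < ε)
    (B : Finset (Fin n → Fin k)) (𝔉 : Finset (Finset (Fin n)))
    (hdisj : ∀ I ∈ 𝔉, ∀ J ∈ 𝔉, I ≠ J → Disjoint I J)
    (hbad : ∀ I ∈ 𝔉, I.card ≤ ℓ ∧ ∃ y, ε < |pdev B I y|) :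
    (𝔉.card : ℝ) * ε ^ 2 ≤ (k : ℝ) ^ ℓ := by
  have hk1 : (1:ℝ) ≤ (k:ℝ) := by exact_mod_cast hk
  have hQ : ∀ I ∈ 𝔉, ε ^ 2 * (k:ℝ) ^ (n - ℓ) ≤ ∑ x : Fin n → Fin k, (pdev B I x)^2 := by
    intro I hI
    obtain ⟨hcard, y, hy⟩ := hbad I hI
    set S := univ.filter (fun x : Fin n → Fin k => ∀ i ∈ I, y i = x i) with hS
    have h1 : ∑ x ∈ S, (pdev B I x)^2 ≤ ∑ x : Fin n → Fin k, (pdev B I x)^2 :=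
      Finset.sum_le_sum_of_subset_of_nonneg (Finset.subset_univ S)
        (fun x _ _ => sq_nonneg _)
    have h2 : ∀ x ∈ S, (pdev B I x)^2 = (pdev B I y)^2 := by
      intro x hx
      rw [pdev_congr B I (fun i hi => ((Finset.mem_filter.mp hx).2 i hi).symm)]
    have h3 : ∑ x ∈ S, (pdev B I x)^2 = ((k:ℝ) ^ (n - I.card)) * (pdev B I y)^2 := by
      rw [Finset.sum_congr rfl h2, Finset.sum_const, nsmul_eq_mul, hS, card_fiber]
      push_cast
      rfl
    have h4 : ε ^ 2 ≤ (pdev B I y)^2 := by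
      have habs : ε ≤ |pdev B I y| := le_of_lt hy
      have := sq_abs (pdev B I y)
      nlinarith [abs_nonneg (pdev B I y)]
    have h5 : (k:ℝ) ^ (n - ℓ) ≤ (k:ℝ) ^ (n - I.card) :=
      pow_le_pow_right₀ hk1 (Nat.sub_le_sub_left hcard n)
    calc ε ^ 2 * (k:ℝ) ^ (n - ℓ) ≤ (pdev B I y)^2 * (k:ℝ) ^ (n - I.card) := by
          apply mul_le_mul h4 h5 (by positivity) (sq_nonneg _)
      _ = ((k:ℝ) ^ (n - I.card)) * (pdev B I y)^2 := by ring
      _ = ∑ x ∈ S, (pdev B I x)^2 := h3.symm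
      _ ≤ ∑ x : Fin n → Fin k, (pdev B I x)^2 := h1
  have hsum : (𝔉.card : ℝ) * (ε ^ 2 * (k:ℝ) ^ (n - ℓ)) ≤ (k:ℝ)^n := by
    have h6 := Finset.card_nsmul_le_sum 𝔉 _ _ hQ
    rw [nsmul_eq_mul] at h6
    exact le_trans h6 (bessel hk B 𝔉 hdisj)
  have h7 : (k:ℝ)^n ≤ (k:ℝ)^ℓ * (k:ℝ)^(n - ℓ) := by
    rw [← pow_add]
    exact pow_le_pow_right₀ hk1 (by omega)
  have hp : (0:ℝ) < (k:ℝ)^(n - ℓ) := by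
    have : (0:ℝ) < (k:ℝ) := lt_of_lt_of_le one_pos hk1
    positivity
  have h8 : ((𝔉.card : ℝ) * ε ^ 2) * (k:ℝ)^(n-ℓ) ≤ ((k:ℝ)^ℓ) * (k:ℝ)^(n-ℓ) := by
    calc ((𝔉.card : ℝ) * ε ^ 2) * (k:ℝ)^(n-ℓ) = (𝔉.card : ℝ) * (ε ^ 2 * (k:ℝ)^(n-ℓ)) := by ring
      _ ≤ (k:ℝ)^n := hsum
      _ ≤ ((k:ℝ)^ℓ) * (k:ℝ)^(n-ℓ) := h7
  exact le_of_mul_le_mul_right h8 hp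

end real_core

noncomputable def levelSet (A : Set (Word k)) (n : ℕ) : Finset (Fin n → Fin k) :=
  (Set.toFinite {x : Fin n → Fin k | List.ofFn x ∈ A}).toFinset

lemma mem_levelSet {A : Set (Word k)} {n : ℕ} {x : Fin n → Fin k} :
    x ∈ levelSet A n ↔ List.ofFn x ∈ A := by
  simp [levelSet]

def phiI (n : ℕ) (I : Finset ℕ) : Finset (Fin n) :=
  univ.filter (fun j : Fin n => (j : ℕ) ∈ I)

lemma mem_phiI {n : ℕ} {I : Finset ℕ} {j : Fin n} : j ∈ phiI n I ↔ (j : ℕ) ∈ I := by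
  simp [phiI]

lemma image_phiI {n : ℕ} {I : Finset ℕ} (hI : ∀ i ∈ I, i < n) :
    (phiI n I).image Fin.val = I := by
  ext i
  simp only [Finset.mem_image]
  constructor
  · rintro ⟨j, hj, rfl⟩
    exact mem_phiI.mp hj
  · intro hi
    exact ⟨⟨i, hI i hi⟩, mem_phiI.mpr hi, rfl⟩

lemma card_phiI {n : ℕ} {I : Finset ℕ} (hI : ∀ i ∈ I, i < n) :
    (phiI n I).card = I.card := by
  calc (phiI n I).card = ((phiI n I).image Fin.val).card :=
        (Finset.card_image_of_injective _ Fin.val_injective).symm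
    _ = I.card := by rw [image_phiI hI]

lemma ofFn_of_length {l : Word k} {n : ℕ} (h : l.length = n) :
    List.ofFn (fun i : Fin n => l.get (Fin.cast h.symm i)) = l := by
  subst h
  simp

lemma get?_ofFn' {n : ℕ} (f : Fin n → Fin k) {i : ℕ} (h : i < n) :
    (List.ofFn f)[i]? = some (f ⟨i, h⟩) := by
  simp [List.getElem?_ofFn, h]

lemma dens_eq (A : Set (Word k)) (n : ℕ) :
    dens k n A = ((levelSet A n).card : ℝ) / (k : ℝ) ^ n := by
  have hset : {x ∈ A | x.length = n} = List.ofFn '' (↑(levelSet A n) : Set (Fin n → Fin k)) := by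
    ext l
    simp only [Set.mem_setOf_eq, Set.mem_image, Finset.coe_sort_coe, Finset.mem_coe,
      mem_levelSet]
    constructor
    · rintro ⟨hA, hlen⟩
      refine ⟨fun i : Fin n => l.get (Fin.cast hlen.symm i), ?_, ofFn_of_length hlen⟩
      rw [ofFn_of_length hlen]
      exact hA
    · rintro ⟨x, hx, rfl⟩
      exact ⟨hx, List.length_ofFn⟩
  unfold _root_.dens
  rw [hset, Set.ncard_image_of_injective _ List.ofFn_injective, Set.ncard_coe_finset]

lemma secDens_eq (A : Set (Word k)) (n : ℕ) (I : Finset ℕ) (hI : ∀ i ∈ I, i < n)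
    (y : ℕ → Fin k) :
    secDens k n I y A
      = (cnt (levelSet A n) (phiI n I) (fun j => y (j : ℕ)) : ℝ) / (k : ℝ) ^ (n - I.card) := by
  have hset : {x ∈ A | x.length = n ∧ ∀ i ∈ I, x[i]? = some (y i)}
      = List.ofFn '' (↑((levelSet A n).filter
          (fun b => ∀ j ∈ phiI n I, b j = y (j : ℕ))) : Set (Fin n → Fin k)) := by
    ext l
    simp only [Set.mem_setOf_eq, Set.mem_image, Finset.mem_coe, Finset.mem_filter,
      mem_levelSet]
    constructor
    · rintro ⟨hA, hlen, hcond⟩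
      refine ⟨fun i : Fin n => l.get (Fin.cast hlen.symm i), ⟨?_, ?_⟩, ofFn_of_length hlen⟩
      · rw [ofFn_of_length hlen]; exact hA
      · intro j hj
        have hjI : (j : ℕ) ∈ I := mem_phiI.mp hj
        have := hcond (j : ℕ) hjI
        rw [← ofFn_of_length hlen, get?_ofFn' _ j.isLt] at this
        simpa using this
    · rintro ⟨x, ⟨hx, hcond⟩, rfl⟩
      refine ⟨hx, List.length_ofFn, ?_⟩
      intro i hi
      rw [get?_ofFn' x (hI i hi)]
      exact congrArg some (hcond ⟨i, hI i hi⟩ (mem_phiI.mpr hi))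
  unfold secDens
  rw [hset, Set.ncard_image_of_injective _ List.ofFn_injective, Set.ncard_coe_finset]
  rfl

lemma secDens_empty (A : Set (Word k)) (n : ℕ) (y : ℕ → Fin k) :
    secDens k n (∅ : Finset ℕ) y A = dens k n A := by
  unfold secDens _root_.dens
  simp


def Bad (ε : ℝ) (ℓ : ℕ) (A : Set (Word k)) (n : ℕ) (I : Finset ℕ) : Prop :=
  I.Nonempty ∧ I.card ≤ ℓ ∧ (∀ i ∈ I, i < n) ∧
    ∃ y : ℕ → Fin k, ε < |secDens k n I y A - dens k n A|

lemma nat_bad_bound (hk : 1 ≤ k) {ε : ℝ} (hε : 0 < ε) (ℓ : ℕ) (A : Set (Word k)) (n : ℕ)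
    (𝔉 : Finset (Finset ℕ)) (h1 : ∀ I ∈ 𝔉, Bad ε ℓ A n I)
    (h2 : ∀ I ∈ 𝔉, ∀ J ∈ 𝔉, I ≠ J → Disjoint I J) :
    𝔉.card ≤ ⌈(k:ℝ)^ℓ / ε^2⌉₊ := by
  classical
  set B := levelSet A n with hB
  set 𝔉' := 𝔉.image (phiI n) with h𝔉'
  have hrecov : ∀ I ∈ 𝔉, (phiI n I).image Fin.val = I := by
    intro I hI
    exact image_phiI (h1 I hI).2.2.1
  have hinj : Set.InjOn (phiI n) ↑𝔉 := by
    intro I hI J hJ hIJ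
    rw [← hrecov I hI, ← hrecov J hJ, hIJ]
  have hcard' : 𝔉'.card = 𝔉.card := Finset.card_image_of_injOn hinj
  have hdisj' : ∀ I' ∈ 𝔉', ∀ J' ∈ 𝔉', I' ≠ J' → Disjoint I' J' := by
    intro I' hI' J' hJ' hne
    obtain ⟨I, hI, rfl⟩ := Finset.mem_image.mp hI'
    obtain ⟨J, hJ, rfl⟩ := Finset.mem_image.mp hJ'
    have hIJ : I ≠ J := fun h => hne (by rw [h])
    have hd := h2 I hI J hJ hIJ
    rw [Finset.disjoint_left]
    intro j hj hj'
    exact (Finset.disjoint_left.mp hd (mem_phiI.mp hj)) (mem_phiI.mp hj')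
  have hbad' : ∀ I' ∈ 𝔉', I'.card ≤ ℓ ∧ ∃ y', ε < |pdev B I' y'| := by
    intro I' hI'
    obtain ⟨I, hI, rfl⟩ := Finset.mem_image.mp hI'
    obtain ⟨hne, hcard, hlt, y, hy⟩ := h1 I hI
    refine ⟨by rw [card_phiI hlt]; exact hcard, fun j => y (j : ℕ), ?_⟩
    have heq : pdev B (phiI n I) (fun j => y (j : ℕ))
        = secDens k n I y A - dens k n A := by
      unfold pdev
      rw [card_phiI hlt, secDens_eq A n I hlt y, dens_eq A n]
    rw [heq]
    exact hy
  have hb := bad_family_bound hk hε B 𝔉' hdisj' hbad'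
  rw [hcard'] at hb
  have hε2 : (0:ℝ) < ε^2 := by positivity
  have h9 : (𝔉.card : ℝ) ≤ (k:ℝ)^ℓ / ε^2 := (le_div_iff₀ hε2).mpr hb
  have h10 : (𝔉.card : ℝ) ≤ (⌈(k:ℝ)^ℓ / ε^2⌉₊ : ℝ) := le_trans h9 (Nat.le_ceil _)
  exact_mod_cast h10


lemma exists_transversal {α : Type*} [DecidableEq α] (ℓ : ℕ) :
    ∀ (D : ℕ) (P : Finset α → Prop),
      (∀ I, P I → I.Nonempty ∧ I.card ≤ ℓ) →
      (∀ 𝔉 : Finset (Finset α), (∀ I ∈ 𝔉, P I) →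
        (∀ I ∈ 𝔉, ∀ J ∈ 𝔉, I ≠ J → Disjoint I J) → 𝔉.card ≤ D) →
      ∃ T : Finset α, T.card ≤ ℓ * D ∧ ∀ I, P I → (I ∩ T).Nonempty := by
  intro D
  induction D with
  | zero =>
    intro P hP hbound
    refine ⟨∅, by simp, ?_⟩
    intro I hI
    exfalso
    have h1 : ({I} : Finset (Finset α)).card ≤ 0 := by
      apply hbound
      · intro J hJ; rw [Finset.mem_singleton] at hJ; subst hJ; exact hI
      · intro J hJ J' hJ' hne
        rw [Finset.mem_singleton] at hJ hJ'
        subst hJ; subst hJ'; exact absurd rfl hne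
    simp at h1
  | succ D ih =>
    intro P hP hbound
    by_cases hex : ∃ I₀, P I₀
    · obtain ⟨I₀, hI₀⟩ := hex
      have hrec : ∀ 𝔉 : Finset (Finset α), (∀ I ∈ 𝔉, P I ∧ Disjoint I I₀) →
          (∀ I ∈ 𝔉, ∀ J ∈ 𝔉, I ≠ J → Disjoint I J) → 𝔉.card ≤ D := by
        intro 𝔉 h1 h2
        have hno : I₀ ∉ 𝔉 := by
          intro hmem
          have hd := (h1 I₀ hmem).2
          rw [disjoint_self] at hd
          exact (hP I₀ hI₀).1.ne_empty (by simpa using hd)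
        have hb : (insert I₀ 𝔉).card ≤ D + 1 := by
          apply hbound
          · intro I hI
            rcases Finset.mem_insert.mp hI with rfl | h
            · exact hI₀
            · exact (h1 I h).1
          · intro I hI J hJ hne
            rcases Finset.mem_insert.mp hI with rfl | hI' <;>
              rcases Finset.mem_insert.mp hJ with rfl | hJ'
            · exact absurd rfl hne
            · exact ((h1 J hJ').2).symm
            · exact (h1 I hI').2
            · exact h2 I hI' J hJ' hne
        rw [Finset.card_insert_of_notMem hno] at hb
        omega
      obtain ⟨T', hT'c, hT'⟩ := ih (fun I => P I ∧ Disjoint I I₀)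
        (fun I hI => hP I hI.1) hrec
      refine ⟨T' ∪ I₀, ?_, ?_⟩
      · calc (T' ∪ I₀).card ≤ T'.card + I₀.card := Finset.card_union_le _ _
          _ ≤ ℓ * D + ℓ := add_le_add hT'c (hP I₀ hI₀).2
          _ = ℓ * (D + 1) := by ring
      · intro I hI
        by_cases hd : Disjoint I I₀
        · obtain ⟨a, ha⟩ := hT' I ⟨hI, hd⟩
          rw [Finset.mem_inter] at ha
          exact ⟨a, Finset.mem_inter.mpr ⟨ha.1, Finset.mem_union_left _ ha.2⟩⟩
        · obtain ⟨a, haI, haI₀⟩ := Finset.not_disjoint_iff.mp hd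
          exact ⟨a, Finset.mem_inter.mpr ⟨haI, Finset.mem_union_right _ haI₀⟩⟩
    · push_neg at hex
      exact ⟨∅, by simp, fun I hI => absurd hI (hex I)⟩

lemma greedy_select (T : ℕ → Finset ℕ) (Bnd : ℕ) (hT : ∀ m, (T m).card ≤ Bnd) :
    ∀ (ℓ : ℕ) (pool : Finset ℕ), ℓ * (Bnd + 1) ≤ pool.card →
    ∃ L : Finset ℕ, L ⊆ pool ∧ L.card = ℓ ∧
      ∀ n ∈ L, ∀ m ∈ L, m < n → m ∉ T n := by
  intro ℓ
  induction ℓ with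
  | zero => intro pool _; exact ⟨∅, by simp, by simp, by simp⟩
  | succ ℓ ih =>
    intro pool hpool
    have hne : pool.Nonempty := by
      rw [← Finset.card_pos]
      nlinarith
    set a := pool.max' hne with ha
    set pool' := (pool.erase a) \ T a with hpool'
    have hcard : ℓ * (Bnd + 1) ≤ pool'.card := by
      have h1 : (pool.erase a).card = pool.card - 1 :=
        Finset.card_erase_of_mem (pool.max'_mem hne)
      have h4 : 1 ≤ pool.card := Finset.card_pos.mpr hne
      have h1' : (pool.erase a).card + 1 = pool.card := by omega
      have h2 : (pool.erase a).card ≤ pool'.card + (T a).card := by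
        have h5 := Finset.le_card_sdiff (T a) (pool.erase a)
        rw [← hpool'] at h5
        omega
      have h3 := hT a
      have hX : ℓ * (Bnd + 1) + Bnd + 1 ≤ pool.card := by
        calc ℓ * (Bnd + 1) + Bnd + 1 = (ℓ + 1) * (Bnd + 1) := by ring
          _ ≤ pool.card := hpool
      linarith
    obtain ⟨L', hL'sub, hL'card, hL'prop⟩ := ih pool' hcard
    have hL'pool : L' ⊆ pool := fun x hx =>
      Finset.mem_of_mem_erase (Finset.mem_sdiff.mp (hL'sub hx)).1
    have hanotin : a ∉ L' := by
      intro h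
      exact (Finset.notMem_erase a pool) (Finset.mem_sdiff.mp (hL'sub h)).1
    refine ⟨insert a L', ?_, ?_, ?_⟩
    · intro x hx
      rcases Finset.mem_insert.mp hx with rfl | h
      · exact pool.max'_mem hne
      · exact hL'pool h
    · rw [Finset.card_insert_of_notMem hanotin, hL'card]
    · intro n hn m hm hmn
      rcases Finset.mem_insert.mp hn with hna | hn'
      · have hm' : m ∈ L' := by
          rcases Finset.mem_insert.mp hm with hma | h
          · exfalso; rw [hna, ← hma] at hmn; exact lt_irrefl m hmn
          · exact h
        rw [hna]
        rw [hna] at hmn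
        exact (Finset.mem_sdiff.mp (hL'sub hm')).2
      · have hm' : m ∈ L' := by
          rcases Finset.mem_insert.mp hm with hma | h
          · exfalso
            have h6 : n ≤ a := pool.le_max' n (hL'pool hn')
            omega
          · exact h
        exact hL'prop n hn' m hm' hmn

end RegLemma


/-- The regularity lemma for subsets of `[k]^{<ℕ}`. -/
theorem regularity_lemma (ε : ℝ) (hε0 : 0 < ε) (hε1 : ε ≤ 1) (k ℓ q : ℕ)
    (hk : 2 ≤ k) (hℓ : 1 ≤ ℓ) (hq : 1 ≤ q) :
    ∃ n : ℕ, ∀ N : Finset ℕ, n ≤ N.card → ∀ F : Finset (Set (Word k)), F.card = q →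
      ∃ L : Finset ℕ, L ⊆ N ∧ L.card = ℓ ∧ RegularFamily k ε L F := by
  classical
  set D := ⌈(k:ℝ)^ℓ / ε^2⌉₊ with hD
  set Bnd := q * (ℓ * D) with hBnd
  refine ⟨ℓ * (Bnd + 1), ?_⟩
  intro N hN F hF
  have hk1 : 1 ≤ k := by omega
  have htrans : ∀ (A : Set (Word k)) (m : ℕ), ∃ T : Finset ℕ, T.card ≤ ℓ * D ∧
      ∀ I, RegLemma.Bad ε ℓ A m I → (I ∩ T).Nonempty := by
    intro A m
    apply RegLemma.exists_transversal ℓ D (RegLemma.Bad ε ℓ A m)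
    · intro I hI; exact ⟨hI.1, hI.2.1⟩
    · intro 𝔉 hall hdisj
      exact RegLemma.nat_bad_bound hk1 hε0 ℓ A m 𝔉 hall hdisj
  choose T hTcard hThit using htrans
  set Tall : ℕ → Finset ℕ := fun m => F.biUnion (fun A => T A m) with hTall
  have hTallcard : ∀ m, (Tall m).card ≤ Bnd := by
    intro m
    calc (Tall m).card ≤ ∑ A ∈ F, (T A m).card := Finset.card_biUnion_le
      _ ≤ ∑ _A ∈ F, ℓ * D := Finset.sum_le_sum (fun A _ => hTcard A m)
      _ = q * (ℓ * D) := by rw [Finset.sum_const, smul_eq_mul, hF]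
  obtain ⟨L, hLsub, hLcard, hLprop⟩ := RegLemma.greedy_select Tall Bnd hTallcard ℓ N hN
  refine ⟨L, hLsub, hLcard, ?_⟩
  intro A hA n hn I hI y
  by_contra hcon
  push_neg at hcon
  rcases Finset.eq_empty_or_nonempty I with rfl | hne
  · rw [RegLemma.secDens_empty] at hcon
    simp at hcon
    linarith
  · have hIn : ∀ i ∈ I, i < n := fun i hi => (Finset.mem_filter.mp (hI hi)).2
    have hIL : ∀ i ∈ I, i ∈ L := fun i hi => (Finset.mem_filter.mp (hI hi)).1
    have hbad : RegLemma.Bad ε ℓ A n I :=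
      ⟨hne, le_trans (Finset.card_le_card (fun i hi => hIL i hi)) (le_of_eq hLcard),
        hIn, y, hcon⟩
    obtain ⟨i, hi⟩ := hThit A n I hbad
    rw [Finset.mem_inter] at hi
    have hiL : i ∈ L := hIL i hi.1
    have hin : i < n := hIn i hi.1
    have hnotin : i ∉ Tall n := hLprop n hn i hiL hin
    exact hnotin (Finset.mem_biUnion.mpr ⟨A, hA, hi.2⟩)
end

section
/- Let k, m, r ∈ ℕ with k ≥ 2 and m, r ≥ 1, and let g : ℕ → ℕ be a function such that g(n) = 0 for n < m−1 and, for every n ≥ m−1, every combinatorial subspace V of [k]^{<ℕ} of dimension at least g(n) has the property that every r-coloring of Subs_m(V) admits W ∈ Subs_{n+1}(V) with Subs_m(W) monochromatic. Then for all q, n ∈ ℕ with q ≥ 1 and n ≥ g^{(q)}(m) (the q-th iterate of g applied to m), for every n-dimensional Carlson–Simpson tree W of [k]^{<ℕ} and every r-coloring of Subtr_m(W), there exists U ∈ Subtr^{max}_{m+q}(W) such that any two S, T ∈ Subtr_m(U) with depth_U(S) = depth_U(T) have the same color. -/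
/-- A "possibly variable" letter sequence: `none` plays the role of the variable `v`. -/
abbrev VWord (k : ℕ) := List (Option (Fin k))

/-- Substitution of the letter `a` for every occurrence of the variable. -/
def subst {k : ℕ} (w : VWord k) (a : Fin k) : Word k := w.map (fun o => o.getD a)

/-- `w` is a left variable word: its leftmost letter is the variable `v`. -/
def IsLeftVar {k : ℕ} (w : VWord k) : Prop := w.head? = some none

/-- A Carlson–Simpson tree of `[k]^{<ℕ}`, given by its generating sequence:
a word `c` and left variable words `ws 0, …, ws (dim - 1)`. -/
structure CSTree (k : ℕ) where
  dim : ℕ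
  c : Word k
  ws : ℕ → VWord k
  dim_pos : 1 ≤ dim
  left : ∀ i < dim, IsLeftVar (ws i)

/-- The `n`-th level `W(n)` of a Carlson–Simpson tree
(`W(0) = {c}`, `W(n) = {c ⌢ w₀(a₀) ⌢ ⋯ ⌢ w_{n-1}(a_{n-1})}`). -/
def CSTree.level {k : ℕ} (W : CSTree k) (n : ℕ) : Set (Word k) :=
  {x | ∃ a : ℕ → Fin k, x = W.c ++ ((List.range n).map fun i => subst (W.ws i) (a i)).flatten}

/-- The underlying set of a Carlson–Simpson tree: the union of its levels `0, …, dim`. -/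
def CSTree.carrier {k : ℕ} (W : CSTree k) : Set (Word k) :=
  ⋃ n ∈ Finset.range (W.dim + 1), W.level n

/-- An `m`-variable word over `k`: a list over `Fin k ⊕ Fin m` (where `Sum.inr j` is the
variable `v_j`) in which every variable occurs and, for `i < j`, every occurrence of
`v_i` precedes every occurrence of `v_j`. -/
def IsMVarWord (k m : ℕ) (w : List (Fin k ⊕ Fin m)) : Prop :=
  (∀ j : Fin m, Sum.inr j ∈ w) ∧
  ∀ i j : Fin m, i < j → ∀ p q : Fin w.length,
    w.get p = Sum.inr i → w.get q = Sum.inr j → (p : ℕ) < (q : ℕ)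

/-- Substitution in an `m`-variable word. -/
def substM {k m : ℕ} (w : List (Fin k ⊕ Fin m)) (a : Fin m → Fin k) : Word k :=
  w.map (Sum.elim id a)

/-- `V` is an `m`-dimensional combinatorial subspace of `[k]^{<ℕ}`. -/
def IsSubspace (k m : ℕ) (V : Set (Word k)) : Prop :=
  ∃ w : List (Fin k ⊕ Fin m), IsMVarWord k m w ∧
    V = {x | ∃ a : Fin m → Fin k, x = substM w a}

section Part1

variable {k : ℕ}

/-- The concatenation of substituted blocks `0, …, n-1`. -/
def blocks (ws : ℕ → VWord k) (a : ℕ → Fin k) (n : ℕ) : Word k :=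
  ((List.range n).map fun i => subst (ws i) (a i)).flatten

lemma subst_length (w : VWord k) (a : Fin k) : (subst w a).length = w.length :=
  List.length_map _

lemma subst_append (u v : VWord k) (a : Fin k) :
    subst (u ++ v) a = subst u a ++ subst v a := List.map_append

lemma isLeftVar_iff {w : VWord k} : IsLeftVar w ↔ ∃ t, w = none :: t := by
  constructor
  · intro h
    cases w with
    | nil => simp [IsLeftVar] at h
    | cons o t =>
      simp [IsLeftVar] at h
      exact ⟨t, by rw [h]⟩
  · rintro ⟨t, rfl⟩; rfl

lemma subst_leftvar {w : VWord k} (h : IsLeftVar w) (a : Fin k) :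
    ∃ t : Word k, subst w a = a :: t := by
  obtain ⟨t, rfl⟩ := isLeftVar_iff.1 h
  exact ⟨subst t a, rfl⟩

lemma leftvar_ne_nil {w : VWord k} (h : IsLeftVar w) : w ≠ [] := by
  obtain ⟨t, rfl⟩ := isLeftVar_iff.1 h; simp

lemma blocks_zero (ws : ℕ → VWord k) (a : ℕ → Fin k) : blocks ws a 0 = [] := rfl

lemma blocks_succ (ws : ℕ → VWord k) (a : ℕ → Fin k) (n : ℕ) :
    blocks ws a (n + 1) = blocks ws a n ++ subst (ws n) (a n) := by
  simp [blocks, List.range_succ]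

lemma blocks_congr {ws ws' : ℕ → VWord k} {a a' : ℕ → Fin k} {n : ℕ}
    (h : ∀ i < n, subst (ws i) (a i) = subst (ws' i) (a' i)) :
    blocks ws a n = blocks ws' a' n := by
  unfold blocks
  congr 1
  apply List.map_congr_left
  intro i hi
  exact h i (List.mem_range.1 hi)

lemma blocks_split (ws : ℕ → VWord k) (a : ℕ → Fin k) {t n : ℕ} (h : t ≤ n) :
    blocks ws a n = blocks ws a t ++
      ((List.range (n - t)).map fun s => subst (ws (t + s)) (a (t + s))).flatten := by
  unfold blocks
  rw [← List.flatten_append]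
  congr 1
  have : (List.map (fun s => subst (ws (t + s)) (a (t + s))) (List.range (n - t)))
      = List.map ((fun i => subst (ws i) (a i)) ∘ (fun s => t + s)) (List.range (n - t)) := rfl
  rw [this, ← List.map_map, ← List.map_append, ← List.range_add]
  congr 2
  omega

lemma blocks_length (ws : ℕ → VWord k) (a : ℕ → Fin k) (n : ℕ) :
    (blocks ws a n).length = ((List.range n).map fun i => (ws i).length).sum := by
  unfold blocks
  rw [List.length_flatten, List.map_map]
  congr 1
  apply List.map_congr_left
  intro i _
  simp [Function.comp, subst_length]

lemma mem_level {W : CSTree k} {n : ℕ} {x : Word k} :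
    x ∈ W.level n ↔ ∃ a : ℕ → Fin k, x = W.c ++ blocks W.ws a n := Iff.rfl

lemma level_nonempty (hk : 1 ≤ k) (W : CSTree k) (n : ℕ) : (W.level n).Nonempty := by
  refine ⟨W.c ++ blocks W.ws (fun _ => ⟨0, hk⟩) n, ?_⟩
  exact ⟨_, rfl⟩

lemma length_of_mem_level {W : CSTree k} {n : ℕ} {x : Word k} (hx : x ∈ W.level n) :
    x.length = W.c.length + ((List.range n).map fun i => (W.ws i).length).sum := by
  obtain ⟨a, rfl⟩ := hx
  have := blocks_length W.ws a n
  unfold blocks at this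
  rw [List.length_append, this]

lemma mem_level_succ {W : CSTree k} {n : ℕ} {x : Word k} (hx : x ∈ W.level n) (v : Fin k) :
    x ++ subst (W.ws n) v ∈ W.level (n + 1) := by
  obtain ⟨a, rfl⟩ := hx
  refine ⟨fun i => if i = n then v else a i, ?_⟩
  show _ = W.c ++ blocks W.ws _ (n+1)
  rw [blocks_succ, if_pos rfl, ← List.append_assoc]
  congr 2
  show blocks W.ws a n = blocks W.ws _ n
  exact blocks_congr (fun i hi => by rw [if_neg (by omega)])

lemma level_subset_carrier {W : CSTree k} {n : ℕ} (hn : n ≤ W.dim) :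
    W.level n ⊆ W.carrier := by
  intro x hx
  exact Set.mem_biUnion (Finset.mem_range.2 (by omega)) hx

lemma carrier_subset {W : CSTree k} {s : Set (Word k)}
    (h : ∀ n ≤ W.dim, W.level n ⊆ s) : W.carrier ⊆ s := by
  intro x hx
  obtain ⟨n, hn, hxn⟩ := Set.mem_iUnion₂.1 hx
  exact h n (by simpa using Nat.lt_succ_iff.1 (Finset.mem_range.1 hn)) hxn

end Part1

section Part2

variable {k : ℕ}

lemma order_of_split {α : Type*} {u v : List α} {a b : α} (ha : a ∉ v) (hb : b ∉ u)
    (p q : Fin (u ++ v).length) (hp : (u ++ v).get p = a) (hq : (u ++ v).get q = b) :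
    (p : ℕ) < (q : ℕ) := by
  have hpl : (p : ℕ) < u.length := by
    by_contra h
    push_neg at h
    have : (u ++ v).get p = v[(p : ℕ) - u.length]'(by
      have := p.2; simp only [List.length_append] at this; omega) := by
      simpa using List.getElem_append_right h
    exact ha (by rw [← hp, this]; exact List.getElem_mem _)
  have hql : u.length ≤ (q : ℕ) := by
    by_contra h
    push_neg at h
    have : (u ++ v).get q = u[(q : ℕ)]'h := by
      simpa using List.getElem_append_left h
    exact hb (by rw [← hq, this]; exact List.getElem_mem _)
  omega

lemma substM_length {m : ℕ} (w : List (Fin k ⊕ Fin m)) (b : Fin m → Fin k) :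
    (substM w b).length = w.length := List.length_map _

lemma substM_append {m : ℕ} (u v : List (Fin k ⊕ Fin m)) (b : Fin m → Fin k) :
    substM (u ++ v) b = substM u b ++ substM v b := List.map_append

lemma substM_inj {m : ℕ} {w : List (Fin k ⊕ Fin m)} (hw : IsMVarWord k m w) :
    Function.Injective (substM (k := k) w) := by
  intro b b' h
  funext j
  by_contra hne
  obtain ⟨p, hp⟩ := List.mem_iff_get.1 (hw.1 j)
  have hp' : w[(p : ℕ)] = Sum.inr j := by simpa [List.get_eq_getElem] using hp
  have hlt : (p : ℕ) < (substM w b).length := by rw [substM_length]; exact p.2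
  have hlt' : (p : ℕ) < (substM w b').length := by rw [substM_length]; exact p.2
  have h1 : (substM w b)[(p : ℕ)] = b j := by simp [substM, hp']
  have h2 : (substM w b')[(p : ℕ)] = b' j := by simp [substM, hp']
  apply hne
  rw [← h1, ← h2]
  exact List.getElem_of_eq h _

lemma subspace_eq_range {m : ℕ} (w : List (Fin k ⊕ Fin m)) :
    {x : Word k | ∃ a : Fin m → Fin k, x = substM w a} = Set.range (substM w) := by
  ext x; simp [Set.range, eq_comm]

lemma subspace_finite {m : ℕ} {V : Set (Word k)} (hV : IsSubspace k m V) : V.Finite := by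
  obtain ⟨w, _, rfl⟩ := hV
  rw [subspace_eq_range]
  exact Set.finite_range _

lemma subspace_ncard {m : ℕ} {V : Set (Word k)} (hV : IsSubspace k m V) :
    V.ncard = k ^ m := by
  obtain ⟨w, hw, rfl⟩ := hV
  rw [subspace_eq_range, ← Set.image_univ,
    Set.ncard_image_of_injective _ (substM_inj hw), Set.ncard_univ,
    Nat.card_eq_fintype_card, Fintype.card_fun]
  simp

lemma subspace_nonempty (hk : 1 ≤ k) {m : ℕ} {V : Set (Word k)} (hV : IsSubspace k m V) :
    V.Nonempty := by
  obtain ⟨w, hw, rfl⟩ := hV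
  exact ⟨substM w (fun _ => ⟨0, hk⟩), ⟨_, rfl⟩⟩

lemma subspace_dim_le (hk : 2 ≤ k) {a b : ℕ} {V V' : Set (Word k)}
    (hV : IsSubspace k a V) (hV' : IsSubspace k b V') (h : V ⊆ V') : a ≤ b := by
  have h1 : V.ncard ≤ V'.ncard := Set.ncard_le_ncard h (subspace_finite hV')
  rw [subspace_ncard hV, subspace_ncard hV'] at h1
  exact (Nat.pow_le_pow_iff_right (by omega)).1 h1

lemma subspace_eq_of_subset (hk : 2 ≤ k) {a : ℕ} {V V' : Set (Word k)}
    (hV : IsSubspace k a V) (hV' : IsSubspace k a V') (h : V ⊆ V') : V = V' := by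
  apply Set.eq_of_subset_of_ncard_le h _ (subspace_finite hV')
  rw [subspace_ncard hV, subspace_ncard hV']

end Part2

section Part3

variable {k : ℕ}

/-- Encoding of the `i`-th block of a tree level as part of an `j`-variable word. -/
def encB (k j : ℕ) (hk : 1 ≤ k) (i : ℕ) (o : Option (Fin k)) : Fin k ⊕ Fin j :=
  match o with
  | some x => Sum.inl x
  | none => if h : i < j then Sum.inr ⟨i, h⟩ else Sum.inl ⟨0, hk⟩

/-- The `j`-variable word describing the `j`-th level of a tree. -/
def levelWord (hk : 1 ≤ k) (c : Word k) (ws : ℕ → VWord k) (j : ℕ) : List (Fin k ⊕ Fin j) :=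
  c.map Sum.inl ++ ((List.range j).map fun i => (ws i).map (encB k j hk i)).flatten

lemma substM_levelWord (hk : 1 ≤ k) (c : Word k) (ws : ℕ → VWord k) (j : ℕ)
    (b : Fin j → Fin k) :
    substM (levelWord hk c ws j) b
      = c ++ blocks ws (fun i => if h : i < j then b ⟨i, h⟩ else ⟨0, hk⟩) j := by
  unfold substM levelWord blocks
  rw [List.map_append, List.map_map, List.map_flatten, List.map_map]
  congr 1
  · simp
  · congr 1
    apply List.map_congr_left
    intro i hi
    have hij : i < j := List.mem_range.1 hi
    simp only [Function.comp]
    rw [List.map_map]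
    apply List.map_congr_left
    intro o _
    cases o with
    | none => simp [encB, dif_pos hij]
    | some x => simp [encB]

lemma isSubspace_level (hk : 1 ≤ k) (W : CSTree k) {j : ℕ} (hj : j ≤ W.dim) :
    IsSubspace k j (W.level j) := by
  refine ⟨levelWord hk W.c W.ws j, ⟨?_, ?_⟩, ?_⟩
  · -- every variable occurs
    intro jj
    have hnone : (none : Option (Fin k)) ∈ W.ws jj := by
      obtain ⟨t, ht⟩ := isLeftVar_iff.1 (W.left jj (lt_of_lt_of_le jj.2 hj))
      rw [ht]; exact List.mem_cons_self
    have h1 : Sum.inr jj ∈ (W.ws (jj : ℕ)).map (encB k j hk jj) := by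
      refine List.mem_map.2 ⟨none, hnone, ?_⟩
      simp [encB, dif_pos jj.2]
    refine List.mem_append.2 (Or.inr (List.mem_flatten.2 ⟨_, ?_, h1⟩))
    exact List.mem_map.2 ⟨jj, List.mem_range.2 jj.2, rfl⟩
  · -- ordering
    intro i i' hii' p q hp hq
    set u : List (Fin k ⊕ Fin j) := W.c.map Sum.inl ++
      ((List.range (i + 1)).map fun s => (W.ws s).map (encB k j hk s)).flatten with hu
    set v : List (Fin k ⊕ Fin j) :=
      ((List.range (j - (i + 1))).map fun s =>
        (W.ws (i + 1 + s)).map (encB k j hk (i + 1 + s))).flatten with hv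
    have hsplit : levelWord hk W.c W.ws j = u ++ v := by
      unfold levelWord
      rw [hu, hv, List.append_assoc, ← List.flatten_append]
      congr 2
      have : (List.map (fun s => (W.ws (i + 1 + s)).map (encB k j hk (i + 1 + s)))
          (List.range (j - (i + 1))))
          = List.map ((fun s => (W.ws s).map (encB k j hk s)) ∘ (fun s => i + 1 + s))
            (List.range (j - (i + 1))) := rfl
      rw [this, ← List.map_map, ← List.map_append, ← List.range_add]
      congr 2
      have := i.2; omega
    have ha : Sum.inr i ∉ v := by
      intro hmem
      rw [hv] at hmem
      obtain ⟨l, hl, hml⟩ := List.mem_flatten.1 hmem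
      obtain ⟨s, _, rfl⟩ := List.mem_map.1 hl
      obtain ⟨o, _, ho⟩ := List.mem_map.1 hml
      cases o with
      | some x => simp [encB] at ho
      | none =>
        by_cases hsj : i + 1 + s < j
        · simp [encB, dif_pos hsj, Fin.ext_iff] at ho
          omega
        · simp [encB, dif_neg hsj] at ho
    have hb : Sum.inr i' ∉ u := by
      intro hmem
      rw [hu] at hmem
      rcases List.mem_append.1 hmem with hmem | hmem
      · obtain ⟨x, _, hx⟩ := List.mem_map.1 hmem
        simp at hx
      · obtain ⟨l, hl, hml⟩ := List.mem_flatten.1 hmem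
        obtain ⟨s, hs, rfl⟩ := List.mem_map.1 hl
        have hs' : s < i + 1 := List.mem_range.1 hs
        obtain ⟨o, _, ho⟩ := List.mem_map.1 hml
        cases o with
        | some x => simp [encB] at ho
        | none =>
          by_cases hsj : s < j
          · simp [encB, dif_pos hsj, Fin.ext_iff] at ho
            have := hii'
            rw [Fin.lt_def] at this
            omega
          · simp [encB, dif_neg hsj] at ho
    have hplen : (p : ℕ) < (u ++ v).length := by rw [← hsplit]; exact p.2
    have hqlen : (q : ℕ) < (u ++ v).length := by rw [← hsplit]; exact q.2
    have hp' : (u ++ v).get ⟨p, hplen⟩ = Sum.inr i := by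
      have := List.getElem_of_eq hsplit p.2
      rw [List.get_eq_getElem, ← this, ← List.get_eq_getElem]
      exact hp
    have hq' : (u ++ v).get ⟨q, hqlen⟩ = Sum.inr i' := by
      have := List.getElem_of_eq hsplit q.2
      rw [List.get_eq_getElem, ← this, ← List.get_eq_getElem]
      exact hq
    have := order_of_split ha hb _ _ hp' hq'
    simpa using this
  · -- the set equality
    ext x
    constructor
    · rintro ⟨a, rfl⟩
      refine ⟨fun i => a i, ?_⟩
      rw [substM_levelWord]
      congr 1
      apply blocks_congr
      intro i hi
      rw [dif_pos hi]
    · rintro ⟨b, rfl⟩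
      rw [substM_levelWord]
      exact ⟨_, rfl⟩

end Part3

section Part4

variable {k : ℕ}

lemma head_of_append {α : Type*} {u v : List α} {x : α} (hu : u.head? = some x) :
    (u ++ v).head? = some x := by
  rw [List.head?_append, hu]; rfl

/-- The blocks from `j` (inclusive) to `m` (exclusive). -/
def tailB (ws : ℕ → VWord k) (a : ℕ → Fin k) (j m : ℕ) : Word k :=
  ((List.range (m - j)).map fun s => subst (ws (j + s)) (a (j + s))).flatten

lemma blocks_eq_tailB (ws : ℕ → VWord k) (a : ℕ → Fin k) {j m : ℕ} (hj : j ≤ m) :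
    blocks ws a m = blocks ws a j ++ tailB ws a j m := blocks_split ws a hj

lemma tailB_succ (ws : ℕ → VWord k) (a : ℕ → Fin k) {j m : ℕ} (hj : j < m) :
    tailB ws a j m = subst (ws j) (a j) ++ tailB ws a (j + 1) m := by
  unfold tailB
  have h1 : m - j = (m - (j + 1)) + 1 := by omega
  rw [h1, List.range_succ_eq_map, List.map_cons, List.flatten_cons]
  congr 2
  rw [List.map_map]
  apply List.map_congr_left
  intro s _
  simp only [Function.comp]
  congr 2 <;> omega

lemma tailB_last (ws : ℕ → VWord k) (a : ℕ → Fin k) (m : ℕ) :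
    tailB ws a m m = [] := by
  unfold tailB
  simp

lemma subst_head {w : VWord k} (h : IsLeftVar w) (a : Fin k) :
    (subst w a).head? = some a := by
  obtain ⟨t, ht⟩ := subst_leftvar h a
  rw [ht]; rfl

/-- Peeling equal blocks off two equal block decompositions. -/
lemma peel {m : ℕ} (S T : CSTree k) (hS : S.dim = m) (hT : T.dim = m)
    {j : ℕ} (hj : j ≤ m)
    (hf : ∀ i < j, ∀ x, subst (S.ws i) x = subst (T.ws i) x)
    {a b : ℕ → Fin k} (hab : blocks S.ws a m = blocks T.ws b m) :
    (∀ i < j, a i = b i) ∧ tailB S.ws a j m = tailB T.ws b j m := by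
  induction j with
  | zero =>
    refine ⟨by omega, ?_⟩
    have h1 := blocks_eq_tailB S.ws a (Nat.zero_le m)
    have h2 := blocks_eq_tailB T.ws b (Nat.zero_le m)
    rw [blocks_zero] at h1 h2
    simp only [List.nil_append] at h1 h2
    rw [← h1, ← h2]; exact hab
  | succ j ih =>
    have hj' : j ≤ m := by omega
    obtain ⟨hiv, htail⟩ := ih hj' (fun i hi x => hf i (by omega) x)
    have hjm : j < m := by omega
    rw [tailB_succ S.ws a hjm, tailB_succ T.ws b hjm] at htail
    have hhead : a j = b j := by
      have h1 := head_of_append (v := tailB S.ws a (j+1) m) (subst_head (S.left j (by omega)) (a j))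
      have h2 := head_of_append (v := tailB T.ws b (j+1) m) (subst_head (T.left j (by omega)) (b j))
      rw [htail] at h1
      rw [h1] at h2
      exact Option.some.inj h2
    have hbl : subst (S.ws j) (a j) = subst (T.ws j) (b j) := by
      rw [hhead]; exact hf j (by omega) (b j)
    have := List.append_inj htail (by rw [hbl])
    refine ⟨fun i hi => ?_, this.2⟩
    rcases Nat.lt_or_ge i j with h | h
    · exact hiv i h
    · have : i = j := by omega
      rw [this]; exact hhead

/-- If every element of `S.level m` is an element of `T.level m`, then `S.c` is
not shorter than `T.c`. -/
lemma clen_le {m : ℕ} (hk : 2 ≤ k) (hm : 1 ≤ m) (S T : CSTree k)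
    (hS : S.dim = m) (hT : T.dim = m)
    (hset : ∀ a : ℕ → Fin k, ∃ b : ℕ → Fin k,
      S.c ++ blocks S.ws a m = T.c ++ blocks T.ws b m) :
    ¬ (S.c.length < T.c.length) := by
  intro hlt
  have hfirst : ∀ a : ℕ → Fin k, ∃ rest, blocks S.ws a m = a 0 :: rest := by
    intro a
    have h1 := blocks_eq_tailB S.ws a hm
    rw [show blocks S.ws a 1 = subst (S.ws 0) (a 0) from by
      rw [show (1:ℕ) = 0 + 1 from rfl, blocks_succ, blocks_zero, List.nil_append]] at h1
    obtain ⟨t, ht⟩ := subst_leftvar (S.left 0 (by omega)) (a 0)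
    exact ⟨t ++ tailB S.ws a 1 m, by rw [h1, ht]; simp⟩
  have key : ∀ a : ℕ → Fin k, (T.c)[S.c.length]? = some (a 0) := by
    intro a
    obtain ⟨b, hb⟩ := hset a
    obtain ⟨rest, hrest⟩ := hfirst a
    have hdrop : (S.c ++ blocks S.ws a m).drop S.c.length = blocks S.ws a m :=
      List.drop_left
    rw [hb] at hdrop
    rw [List.drop_append_of_le_length (by omega)] at hdrop
    have hne : T.c.drop S.c.length ≠ [] := by
      intro hcon
      have := congrArg List.length hcon
      simp at this
      omega
    have hhead : (T.c.drop S.c.length ++ blocks T.ws b m).head? = (T.c.drop S.c.length).head? := by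
      rw [List.head?_append]
      cases hc : (T.c.drop S.c.length).head? with
      | none => exact absurd (List.head?_eq_none_iff.1 hc) hne
      | some y => rfl
    rw [hdrop, hrest] at hhead
    rw [← List.head?_drop, ← hhead]
    rfl
  have h0 := key (fun _ => ⟨0, by omega⟩)
  have h1 := key (fun _ => ⟨1, by omega⟩)
  rw [h0] at h1
  have : (⟨0, by omega⟩ : Fin k) = ⟨1, by omega⟩ := Option.some.inj h1
  simp [Fin.ext_iff] at this

/-- Not-longer lemma for the `j`-th blocks. -/
lemma wlen_le {m : ℕ} (hk : 2 ≤ k) (S T : CSTree k)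
    (hS : S.dim = m) (hT : T.dim = m) {j : ℕ} (hjm : j < m)
    (hc : S.c = T.c)
    (hf : ∀ i < j, ∀ x, subst (S.ws i) x = subst (T.ws i) x)
    (hset : ∀ a : ℕ → Fin k, ∃ b : ℕ → Fin k,
      S.c ++ blocks S.ws a m = T.c ++ blocks T.ws b m) :
    ¬ ((S.ws j).length < (T.ws j).length) := by
  intro hlt
  -- reduce to equality of tails at j, with matching head values
  have tails : ∀ a : ℕ → Fin k, ∃ b : ℕ → Fin k, b j = a j ∧
      subst (S.ws j) (a j) ++ tailB S.ws a (j+1) m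
        = subst (T.ws j) (b j) ++ tailB T.ws b (j+1) m := by
    intro a
    obtain ⟨b, hb⟩ := hset a
    rw [hc] at hb
    have hblocks := List.append_cancel_left hb
    obtain ⟨_, htail⟩ := peel S T hS hT (le_of_lt hjm) hf hblocks
    rw [tailB_succ S.ws a hjm, tailB_succ T.ws b hjm] at htail
    have hbj : b j = a j := by
      have h1 := head_of_append (v := tailB S.ws a (j+1) m) (subst_head (S.left j (by omega)) (a j))
      have h2 := head_of_append (v := tailB T.ws b (j+1) m) (subst_head (T.left j (by omega)) (b j))
      rw [htail] at h1
      rw [h1] at h2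
      exact (Option.some.inj h2).symm
    exact ⟨b, hbj, htail⟩
  rcases Nat.lt_or_ge (j+1) m with hj1 | hj1
  · -- j+1 < m : look at position (S.ws j).length
    have key : ∀ a : ℕ → Fin k,
        (subst (T.ws j) (a j))[(S.ws j).length]? = some (a (j+1)) := by
      intro a
      obtain ⟨b, hbj, htail⟩ := tails a
      have hdropS : (subst (S.ws j) (a j) ++ tailB S.ws a (j+1) m).drop (S.ws j).length
          = tailB S.ws a (j+1) m := by
        rw [← subst_length (S.ws j) (a j)]
        exact List.drop_left
      rw [htail] at hdropS
      rw [List.drop_append_of_le_length (by rw [subst_length]; omega)] at hdropS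
      have hheadS : (tailB S.ws a (j+1) m).head? = some (a (j+1)) := by
        rw [tailB_succ S.ws a hj1]
        exact head_of_append (subst_head (S.left (j+1) (by omega)) _)
      have hne : (subst (T.ws j) (b j)).drop (S.ws j).length ≠ [] := by
        intro hcon
        have := congrArg List.length hcon
        rw [List.length_drop, subst_length] at this
        simp at this
        omega
      have : ((subst (T.ws j) (b j)).drop (S.ws j).length
          ++ tailB T.ws b (j+1) m).head? = ((subst (T.ws j) (b j)).drop (S.ws j).length).head? := by
        rw [List.head?_append]
        cases hcc : ((subst (T.ws j) (b j)).drop (S.ws j).length).head? with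
        | none => exact absurd (List.head?_eq_none_iff.1 hcc) hne
        | some y => rfl
      rw [hdropS, hheadS] at this
      rw [List.head?_drop, hbj] at this
      exact this.symm
    -- two assignments agreeing at j but differing at j+1
    have h0 := key (fun _ => ⟨0, by omega⟩)
    have h1 := key (fun i => if i = j + 1 then ⟨1, by omega⟩ else ⟨0, by omega⟩)
    rw [if_neg (by omega : ¬ j = j + 1)] at h1
    rw [if_pos rfl] at h1
    rw [h0] at h1
    have : (⟨0, by omega⟩ : Fin k) = ⟨1, by omega⟩ := Option.some.inj h1
    simp [Fin.ext_iff] at this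
  · -- j+1 = m : the blocks are the final ones, equal, so lengths agree
    have hjm1 : j + 1 = m := by omega
    obtain ⟨b, hbj, htail⟩ := tails (fun _ => ⟨0, by omega⟩)
    rw [show j + 1 = m from hjm1, tailB_last, tailB_last] at htail
    simp only [List.append_nil] at htail
    have := congrArg List.length htail
    rw [subst_length, subst_length] at this
    omega

/-- The `m`-th level of an `m`-dimensional Carlson–Simpson tree determines the tree's
substitution data. -/
lemma level_determines {m : ℕ} (hk : 2 ≤ k) (hm : 1 ≤ m) (S T : CSTree k)
    (hS : S.dim = m) (hT : T.dim = m) (h : S.level m = T.level m) :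
    S.c = T.c ∧ ∀ i < m, ∀ x, subst (S.ws i) x = subst (T.ws i) x := by
  have hset : ∀ a : ℕ → Fin k, ∃ b : ℕ → Fin k,
      S.c ++ blocks S.ws a m = T.c ++ blocks T.ws b m := by
    intro a
    have : S.c ++ blocks S.ws a m ∈ S.level m := ⟨a, rfl⟩
    rw [h] at this
    exact this
  have hset' : ∀ b : ℕ → Fin k, ∃ a : ℕ → Fin k,
      T.c ++ blocks T.ws b m = S.c ++ blocks S.ws a m := by
    intro b
    have : T.c ++ blocks T.ws b m ∈ T.level m := ⟨b, rfl⟩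
    rw [← h] at this
    exact this
  have hclen : S.c.length = T.c.length := by
    have h1 := clen_le hk hm S T hS hT hset
    have h2 := clen_le hk hm T S hT hS hset'
    omega
  have hc : S.c = T.c := by
    obtain ⟨b, hb⟩ := hset (fun _ => ⟨0, by omega⟩)
    exact (List.append_inj hb hclen).1
  refine ⟨hc, ?_⟩
  intro j
  induction j using Nat.strong_induction_on with
  | _ j ih =>
    intro hjm x
    have hf : ∀ i < j, ∀ y, subst (S.ws i) y = subst (T.ws i) y :=
      fun i hi y => ih i hi (by omega) y
    have hwlen : (S.ws j).length = (T.ws j).length := by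
      have h1 := wlen_le hk S T hS hT hjm hc hf hset
      have h2 := wlen_le hk T S hT hS hjm hc.symm
        (fun i hi y => (hf i hi y).symm)
        (fun b => by
          obtain ⟨a, ha⟩ := hset' b
          exact ⟨a, ha⟩)
      omega
    -- now use an assignment that is constantly x
    obtain ⟨b, hb⟩ := hset (fun _ => x)
    rw [hc] at hb
    have hblocks := List.append_cancel_left hb
    obtain ⟨_, htail⟩ := peel S T hS hT (le_of_lt hjm) hf hblocks
    rw [tailB_succ S.ws _ hjm, tailB_succ T.ws _ hjm] at htail
    have hbj : b j = x := by
      have h1 := head_of_append (v := tailB S.ws (fun _ => x) (j+1) m)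
        (subst_head (S.left j (by omega)) x)
      have h2 := head_of_append (v := tailB T.ws b (j+1) m)
        (subst_head (T.left j (by omega)) (b j))
      rw [htail] at h1
      rw [h1] at h2
      exact (Option.some.inj h2).symm
    have := (List.append_inj htail (by rw [subst_length, subst_length, hwlen])).1
    rw [this, hbj]

/-- Hence equal `m`-levels give equal carriers. -/
lemma carrier_eq_of_level_eq {m : ℕ} (hk : 2 ≤ k) (hm : 1 ≤ m) (S T : CSTree k)
    (hS : S.dim = m) (hT : T.dim = m) (h : S.level m = T.level m) :
    S.carrier = T.carrier := by
  obtain ⟨hc, hf⟩ := level_determines hk hm S T hS hT h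
  have hlev : ∀ j ≤ m, S.level j = T.level j := by
    intro j hj
    ext x
    constructor
    · rintro ⟨a, rfl⟩
      refine ⟨a, ?_⟩
      show S.c ++ blocks S.ws a j = T.c ++ blocks T.ws a j
      rw [hc, blocks_congr (fun i hi => hf i (by omega) (a i))]
    · rintro ⟨a, rfl⟩
      refine ⟨a, ?_⟩
      show T.c ++ blocks T.ws a j = S.c ++ blocks S.ws a j
      rw [hc, blocks_congr (fun i hi => hf i (by omega) (a i))]
  unfold CSTree.carrier
  rw [hS, hT]
  ext x
  simp only [Set.mem_iUnion]
  constructor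
  · rintro ⟨n, hn, hx⟩
    exact ⟨n, hn, by rw [← hlev n (by simpa using Nat.lt_succ_iff.1 (Finset.mem_range.1 hn))]; exact hx⟩
  · rintro ⟨n, hn, hx⟩
    exact ⟨n, hn, by rw [hlev n (by simpa using Nat.lt_succ_iff.1 (Finset.mem_range.1 hn))]; exact hx⟩

end Part4

section Part5

variable {k : ℕ}

lemma subst_map_some (g : Word k) (v : Fin k) : subst (g.map some) v = g := by
  unfold subst
  rw [List.map_map]
  have : ((fun o : Option (Fin k) => o.getD v) ∘ some) = id := by
    funext x; rfl
  rw [this, List.map_id]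

lemma substM_getElem {M : ℕ} (u : List (Fin k ⊕ Fin M)) (b : Fin M → Fin k)
    {p : ℕ} (hp : p < u.length) :
    (substM u b)[p]'(by rw [substM_length]; exact hp) = Sum.elim id b u[p] := by
  simp [substM]

lemma const_no_var (hk : 2 ≤ k) {M : ℕ} {u : List (Fin k ⊕ Fin M)} {C : Word k}
    (h : ∀ b : Fin M → Fin k, substM u b = C) (j : Fin M) : Sum.inr j ∉ u := by
  intro hmem
  obtain ⟨p, hp⟩ := List.mem_iff_get.1 hmem
  have hp' : u[(p : ℕ)] = Sum.inr j := by simpa [List.get_eq_getElem] using hp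
  have hval : ∀ b : Fin M → Fin k,
      (substM u b)[(p : ℕ)]'(by rw [substM_length]; exact p.2) = b j := by
    intro b
    rw [substM_getElem u b p.2, hp']
    rfl
  have key : ∀ b b' : Fin M → Fin k, b j = b' j := by
    intro b b'
    rw [← hval b, ← hval b']
    exact List.getElem_of_eq (by rw [h b, h b']) _
  have := key (fun _ => ⟨0, by omega⟩) (fun _ => ⟨1, by omega⟩)
  simp [Fin.ext_iff] at this

lemma var_unique (hk : 2 ≤ k) {M : ℕ} {u : List (Fin k ⊕ Fin M)} {g : VWord k} {j' : Fin M}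
    (h : ∀ b : Fin M → Fin k, substM u b = subst g (b j')) {j : Fin M}
    (hmem : Sum.inr j ∈ u) : j = j' := by
  by_contra hne
  obtain ⟨p, hp⟩ := List.mem_iff_get.1 hmem
  have hp' : u[(p : ℕ)] = Sum.inr j := by simpa [List.get_eq_getElem] using hp
  have hval : ∀ b : Fin M → Fin k,
      (substM u b)[(p : ℕ)]'(by rw [substM_length]; exact p.2) = b j := by
    intro b
    rw [substM_getElem u b p.2, hp']
    rfl
  have key : ∀ b b' : Fin M → Fin k, b j' = b' j' → b j = b' j := by
    intro b b' hbb
    rw [← hval b, ← hval b']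
    exact List.getElem_of_eq (by rw [h b, h b', hbb]) _
  have hkey := key (fun _ => ⟨0, by omega⟩)
    (fun i => if i = j then ⟨1, by omega⟩ else ⟨0, by omega⟩)
    (by simp only [if_neg (Ne.symm hne)])
  simp only [if_pos rfl] at hkey
  simp [Fin.ext_iff] at hkey

lemma head_var (hk : 2 ≤ k) {M : ℕ} {u : List (Fin k ⊕ Fin M)} {g : VWord k} {j : Fin M}
    (h : ∀ b : Fin M → Fin k, substM u b = subst g (b j)) (hg : IsLeftVar g)
    (hu : u ≠ []) : u[0]'(List.length_pos_iff.2 hu) = Sum.inr j := by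
  have hval : ∀ b : Fin M → Fin k, Sum.elim id b (u[0]'(List.length_pos_iff.2 hu)) = b j := by
    intro b
    have h1 : (substM u b)[0]'(by rw [substM_length]; exact List.length_pos_iff.2 hu)
        = Sum.elim id b (u[0]'(List.length_pos_iff.2 hu)) := substM_getElem u b _
    obtain ⟨t, ht⟩ := subst_leftvar hg (b j)
    have h2 : (subst g (b j))[0]'(by rw [ht]; simp) = b j := by
      simp [ht]
    rw [← h1]
    rw [← h2]
    congr 1
    exact h b
  cases h0 : u[0]'(List.length_pos_iff.2 hu) with
  | inl y =>
    exfalso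
    have ha := hval (fun _ => ⟨0, by omega⟩)
    have hb := hval (fun _ => ⟨1, by omega⟩)
    rw [h0] at ha hb
    simp only [Sum.elim_inl, id] at ha hb
    rw [ha] at hb
    simp [Fin.ext_iff] at hb
  | inr j'' =>
    by_cases hne : j'' = j
    · rw [hne]
    · exfalso
      have ha := hval (fun i => if i = j then ⟨1, by omega⟩ else ⟨0, by omega⟩)
      rw [h0] at ha
      simp only [Sum.elim_inr, if_neg hne, if_pos rfl] at ha
      simp [Fin.ext_iff] at ha

/-- Dichotomy: a block which always substitutes into `g`-form is either a variable
block or a constant block. -/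
lemma seg_desc (hk : 2 ≤ k) {M : ℕ} {u : List (Fin k ⊕ Fin M)} {g : VWord k}
    (hg : IsLeftVar g) (hu : u ≠ [])
    (hsem : ∀ b : Fin M → Fin k, ∃ v, substM u b = subst g v) :
    ∃ d : Fin M ⊕ Fin k, ∀ b : Fin M → Fin k,
      substM u b = subst g (Sum.elim (fun j => b j) id d) := by
  choose v hv using hsem
  have hval : ∀ b : Fin M → Fin k, Sum.elim id b (u[0]'(List.length_pos_iff.2 hu)) = v b := by
    intro b
    have h1 : (substM u b)[0]'(by rw [substM_length]; exact List.length_pos_iff.2 hu)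
        = Sum.elim id b (u[0]'(List.length_pos_iff.2 hu)) := substM_getElem u b _
    obtain ⟨t, ht⟩ := subst_leftvar hg (v b)
    have h2 : (subst g (v b))[0]'(by rw [ht]; simp) = v b := by simp [ht]
    rw [← h1, ← h2]
    congr 1
    exact hv b
  cases h0 : u[0]'(List.length_pos_iff.2 hu) with
  | inl y =>
    refine ⟨Sum.inr y, fun b => ?_⟩
    have := hval b
    rw [h0] at this
    simp only [Sum.elim_inl] at this
    rw [hv b, ← this]
    rfl
  | inr j =>
    refine ⟨Sum.inl j, fun b => ?_⟩
    have := hval b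
    rw [h0] at this
    simp only [Sum.elim_inr] at this
    rw [hv b, ← this]
    rfl

/-- Cumulative length function. -/
def Lfun (c : Word k) (ws : ℕ → VWord k) (t : ℕ) : ℕ :=
  c.length + ((List.range t).map fun s => (ws s).length).sum

lemma Lfun_zero (c : Word k) (ws : ℕ → VWord k) : Lfun c ws 0 = c.length := by
  simp [Lfun]

lemma Lfun_succ (c : Word k) (ws : ℕ → VWord k) (t : ℕ) :
    Lfun c ws (t + 1) = Lfun c ws t + (ws t).length := by
  unfold Lfun
  rw [List.range_succ, List.map_append, List.sum_append]
  simp [Nat.add_assoc]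

lemma Lfun_mono (c : Word k) (ws : ℕ → VWord k) {t t' : ℕ} (h : t ≤ t') :
    Lfun c ws t ≤ Lfun c ws t' := by
  induction t' with
  | zero =>
    rw [Nat.le_zero.mp h]
  | succ s ih =>
    rcases Nat.lt_or_ge t (s + 1) with h' | h'
    · have := ih (by omega)
      rw [Lfun_succ]
      omega
    · have ht : t = s + 1 := by omega
      rw [ht]

lemma length_level_elt {W : CSTree k} {i : ℕ} {x : Word k} (hx : x ∈ W.level i) :
    x.length = Lfun W.c W.ws i := length_of_mem_level hx

lemma extract_block (c : Word k) (ws : ℕ → VWord k) (a : ℕ → Fin k) {t n : ℕ} (ht : t < n) :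
    ((c ++ blocks ws a n).drop (Lfun c ws t)).take (ws t).length = subst (ws t) (a t) := by
  rw [blocks_eq_tailB ws a (le_of_lt ht), tailB_succ ws a ht]
  rw [show c ++ (blocks ws a t ++ (subst (ws t) (a t) ++ tailB ws a (t+1) n))
      = (c ++ blocks ws a t) ++ (subst (ws t) (a t) ++ tailB ws a (t+1) n) by
    rw [List.append_assoc]]
  have hlen : (c ++ blocks ws a t).length = Lfun c ws t := by
    rw [List.length_append, blocks_length]
    rfl
  rw [← hlen, List.drop_left]
  rw [← subst_length (ws t) (a t), List.take_left]

end Part5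

section Part6

variable {k : ℕ}

lemma subst_flatten (L : List (VWord k)) (v : Fin k) :
    subst L.flatten v = (L.map (fun u => subst u v)).flatten := List.map_flatten

/-- Every combinatorial subspace of the top level of a Carlson–Simpson tree contains
the top level of a Carlson–Simpson subtree of full dimension. -/
lemma tree_of_subspace (hk : 2 ≤ k) (W : CSTree k) {M : ℕ} (hM : 1 ≤ M)
    {X : Set (Word k)} (hX : IsSubspace k M X) (hXW : X ⊆ W.level W.dim) :
    ∃ W' : CSTree k, W'.dim = M ∧ W'.carrier ⊆ W.carrier ∧ W'.level M ⊆ X := by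
  classical
  obtain ⟨w, hw, hXeq⟩ := hX
  have hk0 : 0 < k := by omega
  set a₀ : Fin k := ⟨0, hk0⟩ with ha₀
  have hmemX : ∀ b : Fin M → Fin k, substM w b ∈ X := fun b => by
    rw [hXeq]; exact ⟨b, rfl⟩
  have hmem : ∀ b : Fin M → Fin k, ∃ a : ℕ → Fin k,
      substM w b = W.c ++ blocks W.ws a W.dim :=
    fun b => mem_level.1 (hXW (hmemX b))
  have hlenw : w.length = Lfun W.c W.ws W.dim := by
    have h1 := length_level_elt (hXW (hmemX (fun _ => a₀)))
    rw [substM_length] at h1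
    exact h1
  set seg : ℕ → List (Fin k ⊕ Fin M) :=
    fun t => (w.drop (Lfun W.c W.ws t)).take (W.ws t).length with hsegdef
  have hLle : ∀ t, t < W.dim → Lfun W.c W.ws t + (W.ws t).length ≤ w.length := by
    intro t ht
    rw [hlenw, ← Lfun_succ]
    exact Lfun_mono _ _ (by omega)
  have hwslen : ∀ t, t < W.dim → 1 ≤ (W.ws t).length := fun t ht =>
    List.length_pos_iff.2 (leftvar_ne_nil (W.left t ht))
  have hseglen : ∀ t, t < W.dim → (seg t).length = (W.ws t).length := by
    intro t ht
    rw [hsegdef]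
    simp only [List.length_take, List.length_drop]
    have := hLle t ht
    omega
  have hsegne : ∀ t, t < W.dim → seg t ≠ [] := by
    intro t ht hcon
    have h1 := hseglen t ht
    rw [hcon] at h1
    have := hwslen t ht
    simp at h1
    omega
  have hext_c : ∀ b : Fin M → Fin k, substM (w.take W.c.length) b = W.c := by
    intro b
    obtain ⟨a, ha⟩ := hmem b
    have h1 : substM (w.take W.c.length) b = (substM w b).take W.c.length := by
      unfold substM
      rw [List.map_take]
    rw [h1, ha, List.take_left]
  have hext_seg : ∀ t, t < W.dim → ∀ b : Fin M → Fin k,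
      ∃ v, substM (seg t) b = subst (W.ws t) v := by
    intro t ht b
    obtain ⟨a, ha⟩ := hmem b
    refine ⟨a t, ?_⟩
    have h1 : substM (seg t) b
        = ((substM w b).drop (Lfun W.c W.ws t)).take (W.ws t).length := by
      rw [hsegdef]
      unfold substM
      rw [List.map_take, List.map_drop]
    rw [h1, ha, extract_block W.c W.ws a ht]
  have hdich : ∀ t, ∃ d : Fin M ⊕ Fin k, t < W.dim → ∀ b : Fin M → Fin k,
      substM (seg t) b = subst (W.ws t) (Sum.elim (fun j => b j) id d) := by
    intro t
    by_cases ht : t < W.dim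
    · obtain ⟨d, hd⟩ := seg_desc hk (W.left t ht) (hsegne t ht) (hext_seg t ht)
      exact ⟨d, fun _ => hd⟩
    · exact ⟨Sum.inr a₀, fun h => absurd h ht⟩
  choose A hA using hdich
  have htake_succ : ∀ t, w.take (Lfun W.c W.ws (t + 1))
      = w.take (Lfun W.c W.ws t) ++ seg t := by
    intro t
    rw [Lfun_succ, List.take_add, hsegdef]
  have htake_all : w.take (Lfun W.c W.ws W.dim) = w := by
    rw [← hlenw]
    exact List.take_length
  have hglue : ∀ (b : Fin M → Fin k) (t : ℕ), t ≤ W.dim →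
      substM (w.take (Lfun W.c W.ws t)) b
        = W.c ++ blocks W.ws (fun s => Sum.elim (fun j => b j) id (A s)) t := by
    intro b t
    induction t with
    | zero =>
      intro _
      rw [Lfun_zero, blocks_zero, List.append_nil]
      exact hext_c b
    | succ t ih =>
      intro ht
      rw [htake_succ t, substM_append, ih (by omega), blocks_succ, ← List.append_assoc]
      congr 1
      exact hA t (by omega) b
  have hw_glue : ∀ b : Fin M → Fin k,
      substM w b = W.c ++ blocks W.ws (fun s => Sum.elim (fun j => b j) id (A s)) W.dim := by
    intro b
    rw [← htake_all]
    exact hglue b W.dim le_rfl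
  -- every variable is realized by some block
  have hocc : ∀ j : Fin M, ∃ t, t < W.dim ∧ A t = Sum.inl j := by
    intro j
    by_contra hcon
    push_neg at hcon
    have hind : ∀ t, t ≤ W.dim → Sum.inr j ∉ w.take (Lfun W.c W.ws t) := by
      intro t
      induction t with
      | zero =>
        intro _ hmm0
        rw [Lfun_zero] at hmm0
        exact const_no_var hk hext_c j hmm0
      | succ t ih =>
        intro ht hmm1
        rw [htake_succ t] at hmm1
        rcases List.mem_append.1 hmm1 with hmm | hmm
        · exact ih (by omega) hmm
        · cases hAt : A t with
          | inr y =>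
            refine const_no_var hk (C := subst (W.ws t) y) ?_ j hmm
            intro b
            have h1 := hA t (by omega) b
            rw [hAt] at h1
            simpa using h1
          | inl j' =>
            have hj' : j = j' := by
              refine var_unique hk (g := W.ws t) (j' := j') ?_ hmm
              intro b
              have h1 := hA t (by omega) b
              rw [hAt] at h1
              simpa using h1
            exact hcon t (by omega) (by rw [hAt, hj'])
    exact hind W.dim le_rfl (by rw [htake_all]; exact hw.1 j)
  -- first letters of variable blocks, globally
  have hLlt : ∀ t, t < W.dim → Lfun W.c W.ws t < w.length := by
    intro t ht
    have h1 := hLle t ht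
    have h2 := hwslen t ht
    omega
  have hheadvar : ∀ t (ht : t < W.dim) (j : Fin M), A t = Sum.inl j →
      w[Lfun W.c W.ws t]'(hLlt t ht) = Sum.inr j := by
    intro t ht j hAt
    have hsegpos : 0 < (seg t).length := by
      rw [hseglen t ht]; exact hwslen t ht
    have h1 : (seg t)[0]'(hsegpos) = Sum.inr j := by
      refine head_var hk (g := W.ws t) ?_ (W.left t ht) (hsegne t ht)
      intro b
      have h2 := hA t ht b
      rw [hAt] at h2
      simpa using h2
    have e1 : (seg t)[0]'(hsegpos)
        = (List.drop (Lfun W.c W.ws t) w)[0]'(by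
            rw [List.length_drop]; have := hLlt t ht; have := hseglen t ht; omega) :=
      List.getElem_take
    have e2 : (List.drop (Lfun W.c W.ws t) w)[0]'(by
            rw [List.length_drop]; have := hLlt t ht; have := hseglen t ht; omega)
        = w[Lfun W.c W.ws t + 0]'(by have := hLlt t ht; omega) :=
      List.getElem_drop
    rw [e1, e2] at h1
    simpa using h1
  have hord : ∀ t t', t < W.dim → t' < W.dim → ∀ i j : Fin M,
      A t = Sum.inl i → A t' = Sum.inl j → i < j → t < t' := by
    intro t t' ht ht' i j hAt hAt' hij
    by_contra hle
    push_neg at hle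
    have h1 := hheadvar t ht i hAt
    have h2 := hheadvar t' ht' j hAt'
    have h3 := hw.2 i j hij ⟨Lfun W.c W.ws t, hLlt t ht⟩ ⟨Lfun W.c W.ws t', hLlt t' ht'⟩
      (by simpa [List.get_eq_getElem] using h1) (by simpa [List.get_eq_getElem] using h2)
    simp only [] at h3
    have h4 := Lfun_mono W.c W.ws hle
    omega
  -- the starting block of each variable
  have hexT : ∀ j : Fin M, ∃ t, t < W.dim ∧ A t = Sum.inl j := hocc
  set Tnat : Fin M → ℕ := fun j => Nat.find (hexT j) with hTnat
  have hTspec : ∀ j : Fin M, Tnat j < W.dim ∧ A (Tnat j) = Sum.inl j :=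
    fun j => Nat.find_spec (hexT j)
  have hTmin : ∀ (j : Fin M) (t : ℕ), t < W.dim → A t = Sum.inl j → Tnat j ≤ t :=
    fun j t h1 h2 => Nat.find_le ⟨h1, h2⟩
  set Tf : ℕ → ℕ := fun j => if h : j < M then Tnat ⟨j, h⟩ else W.dim with hTfdef
  have hTf_lt : ∀ j (h : j < M), Tf j < W.dim ∧ A (Tf j) = Sum.inl ⟨j, h⟩ := by
    intro j h
    rw [hTfdef]
    simp only [dif_pos h]
    exact hTspec ⟨j, h⟩
  have hTfM : ∀ j, M ≤ j → Tf j = W.dim := by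
    intro j h
    rw [hTfdef]
    simp only [dif_neg (by omega : ¬ j < M)]
  have hTf_le_dim : ∀ j, Tf j ≤ W.dim := by
    intro j
    by_cases h : j < M
    · exact le_of_lt (hTf_lt j h).1
    · rw [hTfM j (by omega)]
  have hTf_strict : ∀ j j', j < j' → j' ≤ M → Tf j < Tf j' := by
    intro j j' hjj hj'M
    have hj : j < M := by omega
    rcases Nat.lt_or_ge j' M with h | h
    · exact hord _ _ (hTf_lt j hj).1 (hTf_lt j' h).1 ⟨j, hj⟩ ⟨j', h⟩
        (hTf_lt j hj).2 (hTf_lt j' h).2 (by simp [Fin.lt_def]; omega)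
    · rw [hTfM j' (by omega)]
      exact (hTf_lt j hj).1
  have hTf_mono : ∀ j j', j ≤ j' → j' ≤ M → Tf j ≤ Tf j' := by
    intro j j' h h'
    rcases Nat.lt_or_ge j j' with h1 | h1
    · exact le_of_lt (hTf_strict j j' h1 h')
    · have : j = j' := by omega
      rw [this]
  -- classification of blocks within an interval
  have hclsf : ∀ j, j < M → ∀ t, Tf j ≤ t → t < Tf (j + 1) →
      ∀ i : Fin M, A t = Sum.inl i → (i : ℕ) = j := by
    intro j hj t h1 h2 i hAti
    have htdim : t < W.dim := lt_of_lt_of_le h2 (hTf_le_dim (j + 1))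
    have hTit : Tf (i : ℕ) ≤ t := by
      rw [hTfdef]
      simp only [dif_pos i.2]
      exact hTmin _ t htdim (by rw [Fin.eta]; exact hAti)
    by_contra hne
    rcases Nat.lt_or_ge (i : ℕ) j with hlt | hge
    · have := hord t (Tf j) htdim (hTf_lt j hj).1 i ⟨j, hj⟩ hAti (hTf_lt j hj).2
        (by simp [Fin.lt_def]; omega)
      omega
    · have h5 := hTf_mono (j + 1) (i : ℕ) (by omega) (by have := i.2; omega)
      omega
  have hpre : ∀ t, t < Tf 0 → ∀ i : Fin M, A t ≠ Sum.inl i := by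
    intro t ht i hAti
    have htdim : t < W.dim := lt_of_lt_of_le ht (hTf_le_dim 0)
    have h1 : Tf (i : ℕ) ≤ t := by
      rw [hTfdef]
      simp only [dif_pos i.2]
      exact hTmin _ t htdim (by rw [Fin.eta]; exact hAti)
    have h2 : Tf 0 ≤ Tf (i : ℕ) := hTf_mono 0 _ (by omega) (by have := i.2; omega)
    omega
  -- construction of the subtree
  set Ef : (ℕ → Fin k) → ℕ → Fin k :=
    fun a t => Sum.elim (fun j : Fin M => a (j : ℕ)) id (A t) with hEf
  set vseg : ℕ → VWord k :=
    fun t => Sum.elim (fun _ => W.ws t) (fun y => (subst (W.ws t) y).map some) (A t) with hvseg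
  have hsubst_vseg : ∀ t (v : Fin k),
      subst (vseg t) v = subst (W.ws t) (Sum.elim (fun _ => v) id (A t)) := by
    intro t v
    rw [hvseg]
    simp only []
    cases A t with
    | inl j => rfl
    | inr y =>
      simp only [Sum.elim_inr]
      exact subst_map_some _ _
  set W'c : Word k := W.c ++ blocks W.ws (Ef (fun _ => a₀)) (Tf 0) with hW'c
  set W'ws : ℕ → VWord k := fun j =>
    if j < M then ((List.range (Tf (j + 1) - Tf j)).map fun s => vseg (Tf j + s)).flatten
    else [none] with hW'wsdef
  have hleft : ∀ j, IsLeftVar (W'ws j) := by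
    intro j
    rw [hW'wsdef]
    by_cases hj : j < M
    · simp only [if_pos hj]
      have hd : Tf (j + 1) - Tf j = (Tf (j + 1) - Tf j - 1) + 1 := by
        have := hTf_strict j (j + 1) (by omega) (by omega)
        omega
      rw [hd, List.range_succ_eq_map, List.map_cons, List.flatten_cons, Nat.add_zero]
      have hAj : A (Tf j) = Sum.inl ⟨j, hj⟩ := (hTf_lt j hj).2
      have hv : vseg (Tf j) = W.ws (Tf j) := by rw [hvseg]; simp only [hAj]; rfl
      rw [hv]
      obtain ⟨t0, ht0⟩ := isLeftVar_iff.1 (W.left (Tf j) (hTf_lt j hj).1)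
      rw [ht0]
      rfl
    · simp only [if_neg hj]
      rfl
  set W' : CSTree k := ⟨M, W'c, W'ws, hM, fun i _ => hleft i⟩ with hW'
  have hsubst_W'ws : ∀ (j : ℕ), j < M → ∀ v : Fin k, ∀ a : ℕ → Fin k, a j = v →
      subst (W'ws j) v = tailB W.ws (Ef a) (Tf j) (Tf (j + 1)) := by
    intro j hj v a hav
    rw [hW'wsdef]
    simp only [if_pos hj]
    rw [subst_flatten, List.map_map]
    unfold tailB
    congr 1
    apply List.map_congr_left
    intro s hs
    have hsd : s < Tf (j + 1) - Tf j := List.mem_range.1 hs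
    simp only [Function.comp]
    rw [hsubst_vseg]
    have ht1 : Tf j ≤ Tf j + s := by omega
    have ht2 : Tf j + s < Tf (j + 1) := by omega
    cases hAt : A (Tf j + s) with
    | inl i =>
      have hij : (i : ℕ) = j := hclsf j hj (Tf j + s) ht1 ht2 i hAt
      rw [hEf]
      simp only [hAt, Sum.elim_inl, hij, hav]
    | inr y =>
      rw [hEf]
      simp only [hAt, Sum.elim_inr]
  have hlevel_glue : ∀ (a : ℕ → Fin k) (j : ℕ), j ≤ M →
      W'c ++ blocks W'ws a j = W.c ++ blocks W.ws (Ef a) (Tf j) := by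
    intro a j
    induction j with
    | zero =>
      intro _
      rw [blocks_zero, List.append_nil, hW'c]
      congr 1
      apply blocks_congr
      intro t ht
      cases hAt : A t with
      | inl i => exact absurd hAt (hpre t ht i)
      | inr y =>
        rw [hEf]
        simp only [hAt, Sum.elim_inr]
    | succ j ih =>
      intro hj1
      have hmono : Tf j ≤ Tf (j + 1) := le_of_lt (hTf_strict j (j + 1) (by omega) hj1)
      rw [blocks_succ, ← List.append_assoc, ih (by omega),
        blocks_eq_tailB W.ws (Ef a) hmono, ← List.append_assoc]
      congr 1
      exact hsubst_W'ws j (by omega) (a j) a rfl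
  have hlevel_sub : ∀ j, j ≤ M → W'.level j ⊆ W.level (Tf j) := by
    intro j hj x hx
    obtain ⟨a, rfl⟩ := hx
    refine ⟨Ef a, ?_⟩
    show W'c ++ blocks W'ws a j = W.c ++ blocks W.ws (Ef a) (Tf j)
    exact hlevel_glue a j hj
  have hcarrier : W'.carrier ⊆ W.carrier := by
    apply carrier_subset
    intro j hj
    exact subset_trans (hlevel_sub j hj) (level_subset_carrier (hTf_le_dim j))
  have htop : W'.level M ⊆ X := by
    intro x hx
    obtain ⟨a, rfl⟩ := hx
    rw [hXeq]
    refine ⟨fun j => a (j : ℕ), ?_⟩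
    have h1 : W'c ++ blocks W'ws a M = W.c ++ blocks W.ws (Ef a) (Tf M) :=
      hlevel_glue a M le_rfl
    rw [hTfM M le_rfl] at h1
    have h2 := hw_glue (fun j => a (j : ℕ))
    show W'c ++ blocks W'ws a M = substM w (fun j => a (j : ℕ))
    rw [h1, h2]
  exact ⟨W', rfl, hcarrier, htop⟩

end Part6

section Part7

variable {k : ℕ}

/-- The standard `D`-dimensional subspace exists. -/
lemma exists_subspace (k D : ℕ) : ∃ V : Set (Word k), IsSubspace k D V := by
  refine ⟨_, (List.finRange D).map Sum.inr, ⟨?_, ?_⟩, rfl⟩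
  · intro j
    exact List.mem_map.2 ⟨j, List.mem_finRange j, rfl⟩
  · intro i j hij p q hp hq
    have hp' : ((List.finRange D).map Sum.inr)[(p : ℕ)]'p.2 = (Sum.inr i : Fin k ⊕ Fin D) := by
      simpa [List.get_eq_getElem] using hp
    have hq' : ((List.finRange D).map Sum.inr)[(q : ℕ)]'q.2 = (Sum.inr j : Fin k ⊕ Fin D) := by
      simpa [List.get_eq_getElem] using hq
    rw [List.getElem_map, List.getElem_finRange] at hp' hq'
    have hpi : (p : ℕ) = (i : ℕ) := by
      have h1 := Sum.inr_injective hp'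
      have h2 := congrArg Fin.val h1
      simpa using h2
    have hqj : (q : ℕ) = (j : ℕ) := by
      have h1 := Sum.inr_injective hq'
      have h2 := congrArg Fin.val h1
      simpa using h2
    rw [Fin.lt_def] at hij
    omega

/-- The Graham–Rothschild function grows. -/
lemma g_grows {m r : ℕ} (hk : 2 ≤ k) (hr : 1 ≤ r) (g : ℕ → ℕ)
    (hg : ∀ n, m - 1 ≤ n → ∀ d, g n ≤ d → ∀ V : Set (Word k), IsSubspace k d V →
      ∀ χ : Set (Word k) → Fin r, ∃ W : Set (Word k), IsSubspace k (n + 1) W ∧ W ⊆ V ∧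
        ∀ S T : Set (Word k), IsSubspace k m S → S ⊆ W → IsSubspace k m T → T ⊆ W →
          χ S = χ T) :
    ∀ d, m - 1 ≤ d → d + 1 ≤ g d := by
  intro d hd
  by_contra hcon
  push_neg at hcon
  obtain ⟨V, hV⟩ := exists_subspace k (g d)
  obtain ⟨W', hW', hsub, -⟩ := hg d hd (g d) le_rfl V hV (fun _ => ⟨0, hr⟩)
  have := subspace_dim_le hk hW' hV hsub
  omega

lemma iterate_ge {m r : ℕ} (hk : 2 ≤ k) (hr : 1 ≤ r) (hm : 1 ≤ m) (g : ℕ → ℕ)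
    (hg : ∀ n, m - 1 ≤ n → ∀ d, g n ≤ d → ∀ V : Set (Word k), IsSubspace k d V →
      ∀ χ : Set (Word k) → Fin r, ∃ W : Set (Word k), IsSubspace k (n + 1) W ∧ W ⊆ V ∧
        ∀ S T : Set (Word k), IsSubspace k m S → S ⊆ W → IsSubspace k m T → T ⊆ W →
          χ S = χ T) :
    ∀ q, m + q ≤ g^[q] m := by
  intro q
  induction q with
  | zero => simp
  | succ q ih =>
    rw [Function.iterate_succ_apply']
    have h1 := g_grows hk hr g hg (g^[q] m) (by omega)
    omega

/-- Monochromaticity of a set of words with respect to `m`-dimensional subtrees whose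
`m`-th level it contains. -/
def TMono (m : ℕ) {r : ℕ} (χ : Set (Word k) → Fin r) (L : Set (Word k)) : Prop :=
  ∀ S T : CSTree k, S.dim = m → T.dim = m → S.level m ⊆ L → T.level m ⊆ L →
    χ S.carrier = χ T.carrier

lemma tmono_of_subset {m r : ℕ} {χ : Set (Word k) → Fin r} {L L' : Set (Word k)}
    (h : L' ⊆ L) (hL : TMono m χ L) : TMono m χ L' :=
  fun S T hS hT h1 h2 => hL S T hS hT (subset_trans h1 h) (subset_trans h2 h)

lemma tmono_of_subspace_m (hk : 2 ≤ k) {m r : ℕ} (hm : 1 ≤ m) {χ : Set (Word k) → Fin r}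
    {L : Set (Word k)} (hL : IsSubspace k m L) : TMono m χ L := by
  intro S T hS hT h1 h2
  have hk1 : 1 ≤ k := by omega
  have hSsub : IsSubspace k m (S.level m) := isSubspace_level hk1 S (by omega)
  have hTsub : IsSubspace k m (T.level m) := isSubspace_level hk1 T (by omega)
  have e1 : S.level m = L := subspace_eq_of_subset hk hSsub hL h1
  have e2 : T.level m = L := subspace_eq_of_subset hk hTsub hL h2
  exact congrArg χ (carrier_eq_of_level_eq hk hm S T hS hT (by rw [e1, e2]))

/-- One application of the Graham–Rothschild hypothesis inside a tree. -/
lemma step_lemma (hk : 2 ≤ k) {m r : ℕ} (hr : 1 ≤ r) (hm : 1 ≤ m) (g : ℕ → ℕ)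
    (hg : ∀ n, m - 1 ≤ n → ∀ d, g n ≤ d → ∀ V : Set (Word k), IsSubspace k d V →
      ∀ χ : Set (Word k) → Fin r, ∃ W : Set (Word k), IsSubspace k (n + 1) W ∧ W ⊆ V ∧
        ∀ S T : Set (Word k), IsSubspace k m S → S ⊆ W → IsSubspace k m T → T ⊆ W →
          χ S = χ T)
    (χ : Set (Word k) → Fin r) (W : CSTree k) {n' : ℕ} (hn' : m - 1 ≤ n')
    (hd : g n' ≤ W.dim) :
    ∃ W₁ : CSTree k, W₁.dim = n' + 1 ∧ W₁.carrier ⊆ W.carrier ∧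
      W₁.level (n' + 1) ⊆ W.level W.dim ∧ TMono m χ (W₁.level (n' + 1)) := by
  classical
  have hk1 : 1 ≤ k := by omega
  -- the derived coloring of level-sets
  set χ' : Set (Word k) → Fin r := fun Y =>
    if h : ∃ S : CSTree k, S.dim = m ∧ S.level m = Y then χ (Classical.choose h).carrier
    else ⟨0, hr⟩ with hχ'def
  have hχ' : ∀ S : CSTree k, S.dim = m → χ' (S.level m) = χ S.carrier := by
    intro S hS
    have hex : ∃ S' : CSTree k, S'.dim = m ∧ S'.level m = S.level m := ⟨S, hS, rfl⟩
    rw [hχ'def]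
    simp only [dif_pos hex]
    obtain ⟨h1, h2⟩ := Classical.choose_spec hex
    exact congrArg χ (carrier_eq_of_level_eq hk hm _ S h1 hS h2)
  obtain ⟨X, hXdim, hXV, hXmono⟩ := hg n' hn' W.dim hd (W.level W.dim)
    (isSubspace_level hk1 W le_rfl) χ'
  obtain ⟨W₁, hW₁dim, hW₁car, hW₁top⟩ := tree_of_subspace hk W (by omega) hXdim hXV
  have hTX : TMono m χ X := by
    intro S T hS hT h1 h2
    have hSsub : IsSubspace k m (S.level m) := isSubspace_level hk1 S (by omega)
    have hTsub : IsSubspace k m (T.level m) := isSubspace_level hk1 T (by omega)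
    have := hXmono (S.level m) (T.level m) hSsub h1 hTsub h2
    rw [hχ' S hS, hχ' T hT] at this
    exact this

  exact ⟨W₁, hW₁dim, hW₁car, subset_trans hW₁top hXV, tmono_of_subset hW₁top hTX⟩

end Part7

section Part8

variable {k : ℕ}

lemma level_eq_of_fields {U U' : CSTree k} (hc : U.c = U'.c) {j : ℕ}
    (h : ∀ i < j, U.ws i = U'.ws i) : U.level j = U'.level j := by
  ext x
  constructor
  · rintro ⟨a, rfl⟩
    refine ⟨a, ?_⟩
    show U.c ++ blocks U.ws a j = U'.c ++ blocks U'.ws a j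
    rw [hc]
    congr 1
    exact blocks_congr (fun i hi => by rw [h i hi])
  · rintro ⟨a, rfl⟩
    refine ⟨a, ?_⟩
    show U'.c ++ blocks U'.ws a j = U.c ++ blocks U.ws a j
    rw [← hc]
    congr 1
    exact blocks_congr (fun i hi => by rw [h i hi])

lemma carrier_eq_of_levels {U U' : CSTree k} (hd : U.dim = U'.dim)
    (h : ∀ j ≤ U.dim, U.level j = U'.level j) : U.carrier = U'.carrier := by
  unfold CSTree.carrier
  rw [← hd]
  ext x
  simp only [Set.mem_iUnion]
  constructor
  · rintro ⟨n, hn, hx⟩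
    exact ⟨n, hn, by rw [← h n (by have := Finset.mem_range.1 hn; omega)]; exact hx⟩
  · rintro ⟨n, hn, hx⟩
    exact ⟨n, hn, by rw [h n (by have := Finset.mem_range.1 hn; omega)]; exact hx⟩

lemma main_ind (hk : 2 ≤ k) {m r : ℕ} (hr : 1 ≤ r) (hm : 1 ≤ m) (g : ℕ → ℕ)
    (hg : ∀ n, m - 1 ≤ n → ∀ d, g n ≤ d → ∀ V : Set (Word k), IsSubspace k d V →
      ∀ χ : Set (Word k) → Fin r, ∃ W : Set (Word k), IsSubspace k (n + 1) W ∧ W ⊆ V ∧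
        ∀ S T : Set (Word k), IsSubspace k m S → S ⊆ W → IsSubspace k m T → T ⊆ W →
          χ S = χ T)
    (χ : Set (Word k) → Fin r) :
    ∀ q, 1 ≤ q → ∀ W : CSTree k, g^[q] m ≤ W.dim →
      ∃ U : CSTree k, U.dim = m + q ∧ U.carrier ⊆ W.carrier ∧
        U.level (m + q) ⊆ W.level W.dim ∧
        ∀ i, m ≤ i → i ≤ m + q → TMono m χ (U.level i) := by
  intro q hq
  have hk1 : 1 ≤ k := by omega
  induction q, hq using Nat.le_induction with
  | base =>
    intro W hWd
    rw [Function.iterate_one] at hWd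
    obtain ⟨W₁, h1, h2, h3, h4⟩ := step_lemma hk hr hm g hg χ W (by omega) hWd
    refine ⟨W₁, h1, h2, h3, ?_⟩
    intro i him hi
    rcases (by omega : i = m ∨ i = m + 1) with rfl | rfl
    · exact tmono_of_subspace_m hk hm (isSubspace_level hk1 W₁ (by omega))
    · exact h4
  | succ q hq ih =>
    intro W hWd
    have hit := iterate_ge hk hr hm g hg q
    have hd : g (g^[q] m) ≤ W.dim := by
      have h5 : g^[q + 1] m = g (g^[q] m) := Function.iterate_succ_apply' g q m
      omega
    obtain ⟨W₁, hW₁dim, hW₁car, hW₁top, hW₁mono⟩ :=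
      step_lemma hk hr hm g hg χ W (by omega) hd
    -- truncate W₁ to its first g^[q] m levels
    set W₁t : CSTree k := ⟨g^[q] m, W₁.c, W₁.ws, by omega,
      fun i hi => W₁.left i (by omega)⟩ with hW₁tdef
    have hW₁t_car : W₁t.carrier ⊆ W₁.carrier := by
      apply carrier_subset
      intro j hj
      have : W₁t.level j = W₁.level j := rfl
      rw [this]
      have hjj : j ≤ g^[q] m := hj
      exact level_subset_carrier (by rw [hW₁dim]; omega)
    obtain ⟨U₂, hU₂dim, hU₂car, hU₂top, hU₂mono⟩ := ih W₁t (by show g^[q] m ≤ g^[q] m; omega)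
    -- extend U₂ by the last variable word of W₁
    have hleftU : ∀ i, i < m + q + 1 →
        IsLeftVar (if i < m + q then U₂.ws i else W₁.ws (g^[q] m)) := by
      intro i hi
      by_cases h : i < m + q
      · rw [if_pos h]
        exact U₂.left i (by omega)
      · rw [if_neg h]
        exact W₁.left _ (by omega)
    set U : CSTree k := ⟨m + q + 1, U₂.c,
      fun i => if i < m + q then U₂.ws i else W₁.ws (g^[q] m), by omega,
      hleftU⟩ with hUdef
    have hUlev : ∀ j, j ≤ m + q → U.level j = U₂.level j := by
      intro j hj
      apply level_eq_of_fields (show U.c = U₂.c from rfl)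
      intro i hi
      show (if i < m + q then U₂.ws i else W₁.ws (g^[q] m)) = U₂.ws i
      rw [if_pos (by omega)]
    have hUtop : U.level (m + q + 1) ⊆ W₁.level (g^[q] m + 1) := by
      rintro x ⟨a, rfl⟩
      have hy : U₂.c ++ blocks U₂.ws a (m + q) ∈ W₁.level (g^[q] m) :=
        hU₂top ⟨a, rfl⟩
      have hext := mem_level_succ hy (a (m + q))
      show U.c ++ blocks U.ws a (m + q + 1) ∈ W₁.level (g^[q] m + 1)
      rw [blocks_succ,
        show U.ws (m + q) = W₁.ws (g^[q] m) from by
          show (if m + q < m + q then _ else _) = _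
          rw [if_neg (by omega)],
        show blocks U.ws a (m + q) = blocks U₂.ws a (m + q) from
          blocks_congr (fun i hi => by
            show subst (if i < m + q then U₂.ws i else W₁.ws (g^[q] m)) (a i) = _
            rw [if_pos hi]),
        ← List.append_assoc]
      exact hext
    refine ⟨U, rfl, ?_, subset_trans hUtop hW₁top, ?_⟩
    · apply carrier_subset
      intro j hj
      by_cases h : j ≤ m + q
      · rw [hUlev j h]
        have hlev : U₂.level j ⊆ U₂.carrier := level_subset_carrier (by omega)
        exact subset_trans hlev (subset_trans hU₂car (subset_trans hW₁t_car hW₁car))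
      · have hj2 : j ≤ m + q + 1 := hj
        have : j = m + q + 1 := by omega
        rw [this]
        refine subset_trans hUtop (subset_trans hW₁top ?_)
        exact level_subset_carrier le_rfl
    · intro i him hi
      by_cases h : i ≤ m + q
      · rw [hUlev i h]
        exact hU₂mono i him h
      · have : i = m + q + 1 := by omega
        rw [this]
        exact tmono_of_subset hUtop hW₁mono

end Part8

/-- Lemma 4.4 (with the Graham–Rothschild numbers abstracted into a function `g`):
given `g : ℕ → ℕ` vanishing below `m - 1` and such that for `n ≥ m - 1` every
combinatorial subspace of dimension `≥ g n` admits, for every `r`-coloring of its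
`m`-dimensional subspaces, an `(n+1)`-dimensional subspace whose `m`-dimensional
subspaces are monochromatic, then for `q ≥ 1` and `n ≥ g^{(q)}(m)`, every `r`-coloring
of the `m`-dimensional Carlson–Simpson subtrees of an `n`-dimensional Carlson–Simpson
tree `W` admits `U ∈ Subtr^{max}_{m+q}(W)` such that subtrees of equal depth in `U`
get equal colors. -/
theorem cs_tree_depth_coloring (k m r : ℕ) (hk : 2 ≤ k) (hm : 1 ≤ m) (hr : 1 ≤ r)
    (g : ℕ → ℕ) (hg0 : ∀ n, n < m - 1 → g n = 0)
    (hg : ∀ n, m - 1 ≤ n → ∀ d, g n ≤ d → ∀ V : Set (Word k), IsSubspace k d V →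
      ∀ χ : Set (Word k) → Fin r, ∃ W : Set (Word k), IsSubspace k (n + 1) W ∧ W ⊆ V ∧
        ∀ S T : Set (Word k), IsSubspace k m S → S ⊆ W → IsSubspace k m T → T ⊆ W →
          χ S = χ T) :
    ∀ q n : ℕ, 1 ≤ q → g^[q] m ≤ n →
      ∀ W : CSTree k, W.dim = n → ∀ χ : Set (Word k) → Fin r,
        ∃ U : CSTree k, U.dim = m + q ∧ U.carrier ⊆ W.carrier ∧
          U.level U.dim ⊆ W.level W.dim ∧
          ∀ S T : CSTree k, S.dim = m → T.dim = m →
            S.carrier ⊆ U.carrier → T.carrier ⊆ U.carrier →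
            (∃ i : ℕ, S.level m ⊆ U.level i ∧ T.level m ⊆ U.level i) →
            χ S.carrier = χ T.carrier := by
  intro q n hq hn W hWd χ
  have hk1 : 1 ≤ k := by omega
  obtain ⟨U₀, hU₀dim, hU₀car, hU₀top, hU₀mono⟩ :=
    main_ind hk hr hm g hg χ q hq W (by rw [hWd]; exact hn)
  have hleftU : ∀ i, i < m + q →
      IsLeftVar (if i < m + q then U₀.ws i else [(none : Option (Fin k))]) := by
    intro i hi
    rw [if_pos hi]
    exact U₀.left i (by omega)
  set U : CSTree k := ⟨m + q, U₀.c,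
    fun i => if i < m + q then U₀.ws i else [(none : Option (Fin k))], by omega, hleftU⟩
    with hUdef
  have hUlev : ∀ j, j ≤ m + q → U.level j = U₀.level j := by
    intro j hj
    apply level_eq_of_fields (show U.c = U₀.c from rfl)
    intro i hi
    show (if i < m + q then U₀.ws i else _) = U₀.ws i
    rw [if_pos (by omega)]
  have hUcar : U.carrier = U₀.carrier :=
    carrier_eq_of_levels (show U.dim = U₀.dim by rw [hU₀dim]) (fun j hj => hUlev j hj)
  have hUwsne : ∀ i, U.ws i ≠ [] := by
    intro i
    show (if i < m + q then U₀.ws i else _) ≠ []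
    by_cases h : i < m + q
    · rw [if_pos h]
      exact leftvar_ne_nil (U₀.left i (by omega))
    · rw [if_neg h]
      simp
  have hLstrict : ∀ i i', i < i' → Lfun U.c U.ws i < Lfun U.c U.ws i' := by
    intro i i' h
    have h1 : Lfun U.c U.ws i < Lfun U.c U.ws (i + 1) := by
      rw [Lfun_succ]
      have := List.length_pos_iff.2 (hUwsne i)
      omega
    have h2 := Lfun_mono U.c U.ws (show i + 1 ≤ i' by omega)
    omega
  refine ⟨U, rfl, ?_, ?_, ?_⟩
  · rw [hUcar]; exact hU₀car
  · show U.level (m + q) ⊆ W.level W.dim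
    rw [hUlev (m + q) le_rfl]
    exact hU₀top
  · intro S T hS hT hScar hTcar hex
    obtain ⟨i, hSi, hTi⟩ := hex
    obtain ⟨x₀, hx₀⟩ := level_nonempty hk1 S m
    have hx₀i : x₀ ∈ U.level i := hSi hx₀
    have hx₀c : x₀ ∈ U.carrier := hScar (level_subset_carrier (by omega) hx₀)
    obtain ⟨j, hj, hx₀j⟩ := Set.mem_iUnion₂.1 hx₀c
    have hjle : j ≤ m + q := by
      have h1 := Finset.mem_range.1 hj
      have h2 : U.dim = m + q := rfl
      omega
    have hij : i = j := by
      have l1 := length_level_elt hx₀i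
      have l2 := length_level_elt hx₀j
      rcases Nat.lt_trichotomy i j with h | h | h
      · have := hLstrict i j h; omega
      · exact h
      · have := hLstrict j i h; omega
    have him : m ≤ i := by
      have hSsub : IsSubspace k m (S.level m) := isSubspace_level hk1 S (by omega)
      have hUsub : IsSubspace k i (U.level i) :=
        isSubspace_level hk1 U (by show i ≤ m + q; omega)
      exact subspace_dim_le hk hSsub hUsub hSi
    have hmono := hU₀mono i him (by omega)
    rw [← hUlev i (by omega)] at hmono
    exact hmono S T hS hT hSi hTi
end

section
/- Let (Ω,Σ,μ) be a probability space and 0 < λ, β, ε ≤ 1. Let A and B be measurable events with A ⊆ B, μ(A) ≥ λ μ(B) and μ(B) ≥ β. Suppose Q_1,…,Q_n are pairwise disjoint measurable events with μ(B ∖ ⋃_{i=1}^n Q_i) ≤ εβ/2 and μ(Q_i) > 0 for every i. Then, setting I = { i ∈ {1,…,n} : μ_{Q_i}(A) ≥ (λ − ε) μ_{Q_i}(B) and μ_{Q_i}(B) ≥ βε/4 }, we have Σ_{i∈I} μ(Q_i) ≥ βε/4. In particular, if μ(Q_i) = μ(Q_j) for all i, j, then |I| ≥ (βε/4) n. -/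
open MeasureTheory

/-- Lemma 2.6: conditional densities on an almost-cover by pairwise disjoint events.
Here `μ_{Q}(A)` is the conditional probability `μ(A ∩ Q)/μ(Q)` (computed via `toReal`),
and `I` is the set of indices `i` for which `μ_{Q i}(A) ≥ (λ - ε) μ_{Q i}(B)` and
`μ_{Q i}(B) ≥ βε/4`. -/
theorem conditional_density_selection {Ω : Type*} [MeasurableSpace Ω]
    (μ : Measure Ω) [IsProbabilityMeasure μ]
    (lam β ε : ℝ) (hlam0 : 0 < lam) (hlam1 : lam ≤ 1) (hβ0 : 0 < β) (hβ1 : β ≤ 1)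
    (hε0 : 0 < ε) (hε1 : ε ≤ 1)
    (A B : Set Ω) (hAm : MeasurableSet A) (hBm : MeasurableSet B) (hAB : A ⊆ B)
    (hA : lam * (μ B).toReal ≤ (μ A).toReal) (hB : β ≤ (μ B).toReal)
    (n : ℕ) (Q : Fin n → Set Ω) (hQm : ∀ i, MeasurableSet (Q i))
    (hQdisj : ∀ i j, i ≠ j → Disjoint (Q i) (Q j))
    (hQpos : ∀ i, 0 < (μ (Q i)).toReal)
    (hQcover : (μ (B \ ⋃ i, Q i)).toReal ≤ ε * β / 2)
    (I : Finset (Fin n))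
    (hI : ∀ i : Fin n, i ∈ I ↔
      ((lam - ε) * ((μ (B ∩ Q i)).toReal / (μ (Q i)).toReal) ≤
          (μ (A ∩ Q i)).toReal / (μ (Q i)).toReal ∧
        β * ε / 4 ≤ (μ (B ∩ Q i)).toReal / (μ (Q i)).toReal)) :
    β * ε / 4 ≤ ∑ i ∈ I, (μ (Q i)).toReal ∧
      ((∀ i j : Fin n, μ (Q i) = μ (Q j)) → β * ε / 4 * n ≤ (I.card : ℝ)) := by
  classical
  set U := ⋃ i, Q i with hU
  have hUm : MeasurableSet U := MeasurableSet.iUnion hQm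
  set a : Fin n → ℝ := fun i => (μ (A ∩ Q i)).toReal with ha
  set b : Fin n → ℝ := fun i => (μ (B ∩ Q i)).toReal with hb
  set q : Fin n → ℝ := fun i => (μ (Q i)).toReal with hq
  -- sum over pieces = measure of intersection with union
  have hsumQ : ∀ s : Set Ω, MeasurableSet s →
      ∑ i, (μ (s ∩ Q i)).toReal = (μ (s ∩ U)).toReal := by
    intro s hs
    have h1 : μ (s ∩ U) = ∑' i, μ (s ∩ Q i) := by
      rw [hU, Set.inter_iUnion]
      exact measure_iUnion
        (fun i j h => ((hQdisj i j h).mono Set.inter_subset_right Set.inter_subset_right))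
        (fun i => hs.inter (hQm i))
    rw [h1, tsum_fintype, ENNReal.toReal_sum (fun i _ => measure_ne_top μ _)]
  -- decomposition
  have hdecomp : ∀ s : Set Ω, MeasurableSet s →
      (μ s).toReal ≤ (μ (s \ U)).toReal + ∑ i, (μ (s ∩ Q i)).toReal := by
    intro s hs
    rw [hsumQ s hs]
    have h1 : μ (s \ U) + μ (s ∩ U) = μ s := measure_diff_add_inter s hUm
    rw [← h1, ENNReal.toReal_add (measure_ne_top μ _) (measure_ne_top μ _)]
  have hab : ∀ i, a i ≤ b i := fun i =>
    ENNReal.toReal_mono (measure_ne_top μ _)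
      (measure_mono (Set.inter_subset_inter_left _ hAB))
  have hbq : ∀ i, b i ≤ q i := fun i =>
    ENNReal.toReal_mono (measure_ne_top μ _) (measure_mono Set.inter_subset_right)
  have hann : ∀ i, 0 ≤ a i := fun i => ENNReal.toReal_nonneg
  have hbnn : ∀ i, 0 ≤ b i := fun i => ENNReal.toReal_nonneg
  have hqnn : ∀ i, 0 ≤ q i := fun i => ENNReal.toReal_nonneg
  -- total mass of the pieces
  have hsumq1 : ∑ i, q i ≤ 1 := by
    have := hsumQ Set.univ MeasurableSet.univ
    simp only [Set.univ_inter] at this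
    rw [hq]
    rw [this]
    exact ENNReal.toReal_le_of_le_ofReal one_pos.le (by simpa using prob_le_one (μ := μ) (s := U))
  have hsumb : ∑ i, b i ≤ (μ B).toReal := by
    rw [hsumQ B hBm]
    exact ENNReal.toReal_mono (measure_ne_top μ _) (measure_mono Set.inter_subset_left)
  have hcoverA : (μ (A \ U)).toReal ≤ ε * β / 2 :=
    le_trans (ENNReal.toReal_mono (measure_ne_top μ _)
      (measure_mono (Set.diff_subset_diff_left hAB))) hQcover
  have hsumqIc : ∑ i ∈ Iᶜ, q i ≤ 1 :=
    le_trans (Finset.sum_le_sum_of_subset_of_nonneg (Finset.subset_univ _)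
      (fun i _ _ => hqnn i)) hsumq1
  have hsumbIc : ∑ i ∈ Iᶜ, b i ≤ (μ B).toReal :=
    le_trans (Finset.sum_le_sum_of_subset_of_nonneg (Finset.subset_univ _)
      (fun i _ _ => hbnn i)) hsumb
  have main : β * ε / 4 ≤ ∑ i ∈ I, (μ (Q i)).toReal := by
    rcases le_or_gt lam ε with hcase | hcase
    · -- small lam case: use B directly
      have key : ∀ i ∉ I, b i ≤ β * ε / 4 * q i := by
        intro i hi
        have hni : ¬ _ := fun h => hi ((hI i).mpr h)
        rcases not_and_or.mp hni with h | h
        · exfalso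
          exact h (le_trans (mul_nonpos_of_nonpos_of_nonneg (by linarith)
            (div_nonneg (hbnn i) (hqnn i))) (div_nonneg (hann i) (hqnn i)))
        · have h' := not_le.mp h
          have hqi := hQpos i
          have h2 := mul_lt_mul_of_pos_right h' hqi
          rw [div_mul_cancel₀ _ hqi.ne'] at h2
          linarith
      have hBle : (μ B).toReal ≤ ε * β / 2 + ∑ i, b i := by
        have := hdecomp B hBm
        have hc : (μ (B \ U)).toReal ≤ ε * β / 2 := hQcover
        rw [hb]
        linarith
      have hsplit : ∑ i ∈ I, b i + ∑ i ∈ Iᶜ, b i = ∑ i, b i :=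
        Finset.sum_add_sum_compl I b
      have h1 : ∑ i ∈ I, b i ≤ ∑ i ∈ I, q i := Finset.sum_le_sum fun i _ => hbq i
      have h2 : ∑ i ∈ Iᶜ, b i ≤ β * ε / 4 * ∑ i ∈ Iᶜ, q i := by
        rw [Finset.mul_sum]
        exact Finset.sum_le_sum fun i hi => key i (Finset.mem_compl.mp hi)
      have h3 : β * ε / 4 * ∑ i ∈ Iᶜ, q i ≤ β * ε / 4 * 1 :=
        mul_le_mul_of_nonneg_left hsumqIc (by positivity)
      rw [mul_one] at h3
      nlinarith [hB]
    · -- main case: ε < lam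
      have key : ∀ i ∉ I, a i ≤ (lam - ε) * b i + β * ε / 4 * q i := by
        intro i hi
        have hni : ¬ _ := fun h => hi ((hI i).mpr h)
        have hqi := hQpos i
        rcases not_and_or.mp hni with h | h
        · have h' := not_le.mp h
          have h2 := mul_lt_mul_of_pos_right h' hqi
          rw [div_mul_cancel₀ _ hqi.ne', mul_assoc, div_mul_cancel₀ _ hqi.ne'] at h2
          nlinarith [mul_nonneg (mul_nonneg hβ0.le hε0.le) (hqnn i)]
        · have h' := not_le.mp h
          have h2 := mul_lt_mul_of_pos_right h' hqi
          rw [div_mul_cancel₀ _ hqi.ne'] at h2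
          nlinarith [hab i, mul_nonneg (sub_nonneg.mpr hcase.le) (hbnn i)]
      have hAle : (μ A).toReal ≤ ε * β / 2 + ∑ i, a i := by
        have := hdecomp A hAm
        rw [ha]
        linarith
      have hsplit : ∑ i ∈ I, a i + ∑ i ∈ Iᶜ, a i = ∑ i, a i :=
        Finset.sum_add_sum_compl I a
      have h1 : ∑ i ∈ I, a i ≤ ∑ i ∈ I, q i :=
        Finset.sum_le_sum fun i _ => (hab i).trans (hbq i)
      have h2 : ∑ i ∈ Iᶜ, a i ≤ (lam - ε) * ∑ i ∈ Iᶜ, b i + β * ε / 4 * ∑ i ∈ Iᶜ, q i := by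
        rw [Finset.mul_sum, Finset.mul_sum, ← Finset.sum_add_distrib]
        exact Finset.sum_le_sum fun i hi => key i (Finset.mem_compl.mp hi)
      have h3 : (lam - ε) * ∑ i ∈ Iᶜ, b i ≤ (lam - ε) * (μ B).toReal :=
        mul_le_mul_of_nonneg_left hsumbIc (by linarith)
      have h4 : β * ε / 4 * ∑ i ∈ Iᶜ, q i ≤ β * ε / 4 * 1 :=
        mul_le_mul_of_nonneg_left hsumqIc (by positivity)
      rw [mul_one] at h4
      have h5 : ε * β ≤ ε * (μ B).toReal := mul_le_mul_of_nonneg_left hB hε0.le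
      nlinarith [hA]
  refine ⟨main, fun heq => ?_⟩
  rcases Nat.eq_zero_or_pos n with h0 | hn
  · subst h0
    simp only [Nat.cast_zero, mul_zero]
    positivity
  · have i0 : Fin n := ⟨0, hn⟩
    have hceq : ∀ i, (μ (Q i)).toReal = (μ (Q i0)).toReal := fun i => by rw [heq i i0]
    have hSc : ∑ i ∈ I, (μ (Q i)).toReal = I.card * (μ (Q i0)).toReal := by
      rw [Finset.sum_congr rfl fun i _ => hceq i, Finset.sum_const, nsmul_eq_mul]
    have hsumq1' : ∑ i : Fin n, (μ (Q i)).toReal ≤ 1 := hsumq1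
    have hnc : (n : ℝ) * (μ (Q i0)).toReal ≤ 1 := by
      rw [Finset.sum_congr rfl fun i _ => hceq i, Finset.sum_const, nsmul_eq_mul,
        Finset.card_univ, Fintype.card_fin] at hsumq1'
      exact hsumq1'
    have hcpos : 0 < (μ (Q i0)).toReal := hQpos i0
    have hcard : (0 : ℝ) ≤ I.card := Nat.cast_nonneg _
    rw [hSc] at main
    nlinarith [mul_le_mul_of_nonneg_left hnc hcard,
      mul_le_mul_of_nonneg_right main (Nat.cast_nonneg n : (0:ℝ) ≤ n)]
end

section
/- Let 0 < θ < ε ≤ 1 and let n ∈ ℕ with n ≥ (ε² − θ²)^{−1}. If A_1,…,A_n are measurable events in a probability space (Ω,Σ,μ) satisfying μ(A_i) ≥ ε for every i ∈ {1,…,n}, then there exist i, j ∈ {1,…,n} with i ≠ j such that μ(A_i ∩ A_j) ≥ θ². -/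
open MeasureTheory ProbabilityTheory Finset

/-- Lemma 2.7: among `n ≥ (ε² - θ²)⁻¹` events each of measure at least `ε` in a
probability space, two of them intersect in measure at least `θ²`. -/
theorem exists_large_pairwise_intersection {Ω : Type*} [MeasurableSpace Ω]
    (μ : Measure Ω) [IsProbabilityMeasure μ]
    (θ ε : ℝ) (hθ0 : 0 < θ) (hθε : θ < ε) (hε1 : ε ≤ 1)
    (n : ℕ) (hn : (ε ^ 2 - θ ^ 2)⁻¹ ≤ (n : ℝ))
    (A : Fin n → Set Ω) (hAm : ∀ i, MeasurableSet (A i))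
    (hA : ∀ i, ε ≤ (μ (A i)).toReal) :
    ∃ i j : Fin n, i ≠ j ∧ θ ^ 2 ≤ (μ (A i ∩ A j)).toReal := by
  by_contra hcon
  push_neg at hcon
  have hd : 0 < ε ^ 2 - θ ^ 2 := by nlinarith
  have h1 : 1 ≤ (n : ℝ) * (ε ^ 2 - θ ^ 2) := by
    rw [inv_le_iff_one_le_mul₀ hd] at hn
    linarith [hn]
  have hn0 : (0:ℝ) < n := by nlinarith
  set g : Fin n → Ω → ℝ := fun i => (A i).indicator (fun _ => (1:ℝ)) with hgdef
  set f : Ω → ℝ := fun ω => ∑ i, g i ω with hfdef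
  have hgint : ∀ i : Fin n, Integrable (g i) μ :=
    fun i => (integrable_const 1).indicator (hAm i)
  have hEf : ∫ ω, f ω ∂μ = ∑ i, (μ (A i)).toReal := by
    rw [integral_finset_sum _ fun i _ => hgint i]
    refine Finset.sum_congr rfl fun i _ => ?_
    rw [hgdef]
    simp [integral_indicator_const, hAm i, measureReal_def]
  have hsq : ∀ ω, f ω ^ 2 = ∑ i, ∑ j, (A i ∩ A j).indicator (fun _ => (1:ℝ)) ω := by
    intro ω
    rw [hfdef, sq, Finset.sum_mul_sum]
    refine Finset.sum_congr rfl fun i _ => Finset.sum_congr rfl fun j _ => ?_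
    by_cases hi : ω ∈ A i <;> by_cases hj : ω ∈ A j <;>
      simp [hgdef, Set.indicator_apply, hi, hj]
  have hEf2 : ∫ ω, f ω ^ 2 ∂μ = ∑ i, ∑ j, (μ (A i ∩ A j)).toReal := by
    rw [integral_congr_ae (Filter.Eventually.of_forall hsq)]
    rw [integral_finset_sum _ fun i _ => integrable_finset_sum _
      fun j _ => (integrable_const 1).indicator ((hAm i).inter (hAm j))]
    refine Finset.sum_congr rfl fun i _ => ?_
    rw [integral_finset_sum _ fun j _ => (integrable_const 1).indicator ((hAm i).inter (hAm j))]
    refine Finset.sum_congr rfl fun j _ => ?_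
    simp [integral_indicator_const, (hAm i).inter (hAm j), measureReal_def]
  have hmem : MemLp f 2 μ := by
    rw [hfdef]
    exact memLp_finset_sum _ fun i _ =>
      memLp_indicator_const 2 (hAm i) (1:ℝ) (Or.inr (measure_ne_top μ _))
  have hvar := variance_nonneg f μ
  rw [variance_eq_sub hmem] at hvar
  have hCS : (∫ ω, f ω ∂μ) ^ 2 ≤ ∫ ω, f ω ^ 2 ∂μ := by
    have : μ[f ^ 2] = ∫ ω, f ω ^ 2 ∂μ := by
      refine integral_congr_ae (Filter.Eventually.of_forall fun ω => ?_)
      simp [Pi.pow_apply]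
    rw [this] at hvar
    linarith
  -- lower bound on ∫ f
  have hlow : (n : ℝ) * ε ≤ ∫ ω, f ω ∂μ := by
    rw [hEf]
    calc (n : ℝ) * ε = ∑ _i : Fin n, ε := by simp [mul_comm]
    _ ≤ ∑ i, (μ (A i)).toReal := Finset.sum_le_sum fun i _ => hA i
  -- upper bound on ∫ f²
  have hup : ∫ ω, f ω ^ 2 ∂μ ≤ (n : ℝ) * (1 + ((n : ℝ) - 1) * θ ^ 2) := by
    rw [hEf2]
    calc ∑ i, ∑ j, (μ (A i ∩ A j)).toReal
        ≤ ∑ _i : Fin n, (1 + ((n : ℝ) - 1) * θ ^ 2) := by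
          refine Finset.sum_le_sum fun i _ => ?_
          have : ∑ j, (μ (A i ∩ A j)).toReal
              = (μ (A i ∩ A i)).toReal + ∑ j ∈ Finset.univ.erase i, (μ (A i ∩ A j)).toReal := by
            rw [← Finset.add_sum_erase _ _ (Finset.mem_univ i)]
          rw [this]
          have h11 : (μ (A i ∩ A i)).toReal ≤ 1 := by
            simpa using ENNReal.toReal_mono ENNReal.one_ne_top prob_le_one
          have h22 : ∑ j ∈ Finset.univ.erase i, (μ (A i ∩ A j)).toReal
              ≤ ((n : ℝ) - 1) * θ ^ 2 := by
            calc ∑ j ∈ Finset.univ.erase i, (μ (A i ∩ A j)).toReal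
                ≤ ∑ _j ∈ Finset.univ.erase i, θ ^ 2 := by
                  refine Finset.sum_le_sum fun j hj => ?_
                  exact le_of_lt (hcon i j (Ne.symm (Finset.ne_of_mem_erase hj)))
            _ = ((n : ℝ) - 1) * θ ^ 2 := by
                  have hn1 : 1 ≤ n := Nat.one_le_iff_ne_zero.mpr
                    (by exact_mod_cast Nat.cast_pos.mp hn0 |>.ne')
                  rw [Finset.sum_const, Finset.card_erase_of_mem (Finset.mem_univ i),
                    Finset.card_univ, Fintype.card_fin, nsmul_eq_mul]
                  push_cast [Nat.cast_sub hn1]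
                  ring
          linarith
    _ = (n : ℝ) * (1 + ((n : ℝ) - 1) * θ ^ 2) := by
          rw [Finset.sum_const, Finset.card_univ, Fintype.card_fin, nsmul_eq_mul]
  have hε0 : 0 < ε := lt_trans hθ0 hθε
  have hεn0 : 0 ≤ (n : ℝ) * ε := by positivity
  have hkey : ((n : ℝ) * ε) ^ 2 ≤ (n : ℝ) * (1 + ((n : ℝ) - 1) * θ ^ 2) := by
    calc ((n : ℝ) * ε) ^ 2 ≤ (∫ ω, f ω ∂μ) ^ 2 := by
          apply pow_le_pow_left₀ hεn0 hlow 2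
    _ ≤ ∫ ω, f ω ^ 2 ∂μ := hCS
    _ ≤ _ := hup
  nlinarith [mul_pos hn0 (pow_pos hθ0 2), mul_pos hn0 (mul_pos hn0 (pow_pos hθ0 2))]
end

section
/- Let k ∈ ℕ with k ≥ 2 and let L be a finite subset of ℕ with |L| ≥ 2. Then for every subset A of [k]^{<ℕ} there exists a Carlson–Simpson tree W of [k]^{<ℕ} of dimension |L| − 1 with level set L(W) = L such that d^W_{FW}(A) ≥ d_L(A). -/
/-- The common length `ℓ_n` of the words in the `n`-th level of `W`. -/
def CSTree.levelLen {k : ℕ} (W : CSTree k) (n : ℕ) : ℕ :=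
  W.c.length + ∑ i ∈ Finset.range n, (W.ws i).length

/-- The level set `L(W) = {ℓ_0 < … < ℓ_{dim W}}` of `W`. -/
def CSTree.levelSet {k : ℕ} (W : CSTree k) : Finset ℕ :=
  (Finset.range (W.dim + 1)).image W.levelLen

/-- The Furstenberg–Weiss measure of `A` associated to the Carlson–Simpson tree `W`:
`d^W_FW(A) = avg_{n ≤ dim W} dens_{W(n)}(A)`. -/
noncomputable def fwDens {k : ℕ} (W : CSTree k) (A : Set (Word k)) : ℝ :=
  (∑ n ∈ Finset.range (W.dim + 1),
    (Set.ncard (A ∩ W.level n) : ℝ) / (Set.ncard (W.level n) : ℝ)) / (W.dim + 1)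

/-- The generalized Furstenberg–Weiss measure `d_L(A) = avg_{n ∈ L} dens_{[k]^n}(A)`. -/
noncomputable def genFwDens (k : ℕ) (L : Finset ℕ) (A : Set (Word k)) : ℝ :=
  (∑ n ∈ L, (Set.ncard {x ∈ A | x.length = n} : ℝ) / (k : ℝ) ^ n) / L.card

namespace CSAux

/-- Core data for level `n`: the stem letters, the extra letters of each variable word,
and one substitution letter per variable word. -/
abbrev Core (k c0 : ℕ) (e : ℕ → ℕ) (n : ℕ) :=
  (Fin c0 → Fin k) × ((i : Fin n) → (Fin (e i) → Fin k)) × (Fin n → Fin k)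

def cw {k : ℕ} (c0 : ℕ) (e : ℕ → ℕ) (n : ℕ) (p : Core k c0 e n) : Word k :=
  List.ofFn p.1 ++ (List.ofFn fun i : Fin n => p.2.2 i :: List.ofFn (p.2.1 i)).flatten

theorem cw_length {k c0 : ℕ} {e : ℕ → ℕ} {n : ℕ} (p : Core k c0 e n) :
    (cw c0 e n p).length = c0 + ∑ i ∈ Finset.range n, (1 + e i) := by
  simp [cw, List.length_flatten, List.map_ofFn, Function.comp_def, List.sum_ofFn,
    Fin.sum_univ_eq_sum_range (fun i => 1 + e i) n]
  rw [← Fin.sum_univ_eq_sum_range (fun i => 1 + e i) n]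
  exact Finset.sum_congr rfl fun i _ => by omega

def trunc {k c0 : ℕ} {e : ℕ → ℕ} {n : ℕ} (p : Core k c0 e (n + 1)) : Core k c0 e n :=
  ⟨p.1, fun i => p.2.1 i.castSucc, fun i => p.2.2 i.castSucc⟩

theorem cw_succ {k c0 : ℕ} {e : ℕ → ℕ} {n : ℕ} (p : Core k c0 e (n + 1)) :
    cw c0 e (n + 1) p =
      cw c0 e n (trunc p) ++ (p.2.2 (Fin.last n) :: List.ofFn (p.2.1 (Fin.last n))) := by
  simp only [cw, trunc, List.ofFn_succ' (fun i : Fin (n+1) => p.2.2 i :: List.ofFn (p.2.1 i)),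
    List.concat_eq_append, List.flatten_concat, List.append_assoc]

theorem cw_injective {k c0 : ℕ} {e : ℕ → ℕ} (n : ℕ) :
    Function.Injective (cw (k := k) c0 e n) := by
  induction n with
  | zero =>
    intro p q h
    simp only [cw] at h
    obtain ⟨c1, r1, a1⟩ := p; obtain ⟨c2, r2, a2⟩ := q
    simp only [List.ofFn_zero, List.flatten_nil, List.append_nil, List.ofFn_inj] at h
    refine Prod.ext h (Prod.ext ?_ ?_) <;> exact Subsingleton.elim _ _
  | succ n ih =>
    intro p q h
    rw [cw_succ, cw_succ] at h
    have hlen : (p.2.2 (Fin.last n) :: List.ofFn (p.2.1 (Fin.last n))).length =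
        (q.2.2 (Fin.last n) :: List.ofFn (q.2.1 (Fin.last n))).length := by simp
    obtain ⟨h1, h2⟩ := List.append_inj' h hlen
    have ht := ih h1
    simp only [List.cons.injEq, List.ofFn_inj] at h2
    obtain ⟨c1, r1, a1⟩ := p; obtain ⟨c2, r2, a2⟩ := q
    simp only [trunc, Prod.mk.injEq] at ht
    obtain ⟨hc, hr, ha⟩ := ht
    refine Prod.ext hc (Prod.ext ?_ ?_)
    · funext i
      refine Fin.lastCases ?_ (fun j => ?_) i
      · exact h2.2
      · exact congrFun hr j
    · funext i
      refine Fin.lastCases ?_ (fun j => ?_) i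
      · exact h2.1
      · exact congrFun ha j

theorem card_core {k c0 : ℕ} {e : ℕ → ℕ} (n : ℕ) :
    Fintype.card (Core k c0 e n) = k ^ (c0 + ∑ i ∈ Finset.range n, (1 + e i)) := by
  have h1 : ∀ i : Fin n, Fintype.card (Fin (e i) → Fin k) = k ^ (e i) := by
    intro i; simp [Fintype.card_fun]
  simp only [Fintype.card_prod, Fintype.card_pi, Fintype.card_fun, Fintype.card_fin, h1,
    Finset.prod_const, Finset.card_univ, Fintype.card_fin, Finset.prod_pow_eq_pow_sum]
  rw [← pow_add, ← pow_add]
  congr 1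
  rw [Fin.sum_univ_eq_sum_range (fun i => e i) n, Finset.sum_add_distrib]
  simp
  omega


def cwv {k : ℕ} (c0 : ℕ) (e : ℕ → ℕ) (n : ℕ) (p : Core k c0 e n) :
    List.Vector (Fin k) (c0 + ∑ i ∈ Finset.range n, (1 + e i)) :=
  ⟨cw c0 e n p, cw_length p⟩

theorem cwv_bijective {k c0 : ℕ} {e : ℕ → ℕ} (n : ℕ) :
    Function.Bijective (cwv (k := k) c0 e n) := by
  rw [Fintype.bijective_iff_injective_and_card]
  constructor
  · intro p q h
    exact cw_injective n (congrArg Subtype.val h)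
  · rw [card_core, card_vector, Fintype.card_fin]

open Classical in
theorem cw_count {k c0 : ℕ} {e : ℕ → ℕ} (n : ℕ) (A : Set (Word k)) :
    (Finset.univ.filter fun p : Core k c0 e n => cw c0 e n p ∈ A).card =
      Set.ncard {x ∈ A | x.length = c0 + ∑ i ∈ Finset.range n, (1 + e i)} := by
  set N := c0 + ∑ i ∈ Finset.range n, (1 + e i) with hN
  rw [← Fintype.card_subtype, ← Nat.card_eq_fintype_card, ← Nat.card_coe_set_eq]
  apply Nat.card_congr
  refine Equiv.trans (Equiv.subtypeEquiv (q := fun v : List.Vector (Fin k) N => v.1 ∈ A)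
    (Equiv.ofBijective _ (cwv_bijective n)) (fun p => Iff.rfl)) ?_
  exact
  { toFun := fun v => ⟨v.1.1, v.2, v.1.2⟩
    invFun := fun x => ⟨⟨x.1, x.2.2⟩, x.2.1⟩
    left_inv := fun v => rfl
    right_inv := fun x => rfl }


theorem map_range_ofFn {α : Type*} (n : ℕ) (f : ℕ → α) :
    (List.range n).map f = List.ofFn (fun i : Fin n => f ↑i) := by
  apply List.ext_getElem <;> simp

abbrev Seed (k c0 m : ℕ) (e : ℕ → ℕ) :=
  (Fin c0 → Fin k) × ((i : Fin m) → (Fin (e i) → Fin k))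

def restr {k m : ℕ} {e : ℕ → ℕ} (n : ℕ) (hn : n ≤ m)
    (r : (i : Fin m) → (Fin (e i) → Fin k)) : (i : Fin n) → (Fin (e i) → Fin k) :=
  fun i => r ⟨i.1, lt_of_lt_of_le i.2 hn⟩

def mkTree {k c0 m : ℕ} {e : ℕ → ℕ} (hm : 1 ≤ m) (σ : Seed k c0 m e) : CSTree k where
  dim := m
  c := List.ofFn σ.1
  ws := fun i =>
    if h : i < m then none :: List.ofFn (fun j : Fin (e i) => some (σ.2 ⟨i, h⟩ j)) else [none]
  dim_pos := hm
  left := fun i _ => by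
    unfold IsLeftVar
    split <;> rfl

theorem mkTree_levelLen {k c0 m : ℕ} {e : ℕ → ℕ} (hm : 1 ≤ m) (σ : Seed k c0 m e)
    {n : ℕ} (hn : n ≤ m) :
    (mkTree hm σ).levelLen n = c0 + ∑ i ∈ Finset.range n, (1 + e i) := by
  unfold CSTree.levelLen mkTree
  simp only [List.length_ofFn]
  congr 1
  refine Finset.sum_congr rfl fun i hi => ?_
  show (if h : i < m then (none :: List.ofFn fun j => some (σ.2 ⟨i, h⟩ j) : VWord k) else [none]).length = 1 + e i
  rw [dif_pos (lt_of_lt_of_le (Finset.mem_range.mp hi) hn)]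
  simp [Nat.add_comm]

theorem mkTree_word {k c0 m : ℕ} {e : ℕ → ℕ} (hm : 1 ≤ m) (σ : Seed k c0 m e)
    {n : ℕ} (hn : n ≤ m) (a : ℕ → Fin k) (aa : Fin n → Fin k)
    (hagree : ∀ i : Fin n, a ↑i = aa i) :
    (mkTree hm σ).c ++ ((List.range n).map fun i => subst ((mkTree hm σ).ws i) (a i)).flatten
      = cw c0 e n (σ.1, restr n hn σ.2, aa) := by
  unfold cw
  congr 1
  rw [map_range_ofFn n (fun i => subst ((mkTree hm σ).ws i) (a i))]
  congr 1
  rw [List.ofFn_inj]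
  funext i
  have hi : (i : ℕ) < m := lt_of_lt_of_le i.2 hn
  show subst ((mkTree hm σ).ws ↑i) (a ↑i) = aa i :: List.ofFn (restr n hn σ.2 i)
  unfold mkTree
  simp only [dif_pos hi, subst, List.map_cons, Option.getD_none, List.map_ofFn]
  rw [hagree i]
  rfl

theorem mkTree_level {k c0 m : ℕ} {e : ℕ → ℕ} (hk : 2 ≤ k) (hm : 1 ≤ m) (σ : Seed k c0 m e)
    {n : ℕ} (hn : n ≤ m) :
    (mkTree hm σ).level n =
      Set.range (fun aa : Fin n → Fin k => cw c0 e n (σ.1, restr n hn σ.2, aa)) := by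
  ext x
  constructor
  · rintro ⟨a, rfl⟩
    exact ⟨fun i => a ↑i, (mkTree_word hm σ hn a _ (fun i => rfl)).symm⟩
  · rintro ⟨aa, rfl⟩
    refine ⟨fun i => if h : i < n then aa ⟨i, h⟩ else ⟨0, by omega⟩, ?_⟩
    exact (mkTree_word hm σ hn _ aa (fun i => dif_pos i.2)).symm


theorem cw_inj_a {k c0 m : ℕ} {e : ℕ → ℕ} (σ : Seed k c0 m e) {n : ℕ} (hn : n ≤ m) :
    Function.Injective (fun aa : Fin n → Fin k => cw c0 e n (σ.1, restr n hn σ.2, aa)) := by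
  intro a b h
  have := cw_injective n h
  exact congrArg (fun p => p.2.2) this

theorem level_ncard {k c0 m : ℕ} {e : ℕ → ℕ} (hk : 2 ≤ k) (hm : 1 ≤ m)
    (σ : Seed k c0 m e) {n : ℕ} (hn : n ≤ m) :
    ((mkTree hm σ).level n).ncard = k ^ n := by
  rw [mkTree_level hk hm σ hn, ← Set.image_univ,
    Set.ncard_image_of_injective _ (cw_inj_a σ hn), Set.ncard_univ,
    Nat.card_eq_fintype_card, Fintype.card_fun, Fintype.card_fin, Fintype.card_fin]

open Classical in
theorem inter_ncard {k c0 m : ℕ} {e : ℕ → ℕ} (hk : 2 ≤ k) (hm : 1 ≤ m)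
    (σ : Seed k c0 m e) {n : ℕ} (hn : n ≤ m) (A : Set (Word k)) :
    (A ∩ (mkTree hm σ).level n).ncard =
      (Finset.univ.filter fun aa : Fin n → Fin k =>
        cw c0 e n (σ.1, restr n hn σ.2, aa) ∈ A).card := by
  set f := fun aa : Fin n → Fin k => cw c0 e n (σ.1, restr n hn σ.2, aa) with hf
  rw [mkTree_level hk hm σ hn, ← hf, ← Set.image_preimage_eq_inter_range,
    Set.ncard_image_of_injective _ (cw_inj_a σ hn), ← Nat.card_coe_set_eq,
    Nat.card_eq_fintype_card]
  exact Fintype.card_subtype _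

def restrEquiv {k m : ℕ} {e : ℕ → ℕ} (n : ℕ) (hn : n ≤ m) :
    ((i : Fin m) → Fin (e i) → Fin k) ≃
      (((i : Fin n) → Fin (e i) → Fin k) × ((i : Fin m) → n ≤ ↑i → Fin (e i) → Fin k)) where
  toFun r := (restr n hn r, fun i _ => r i)
  invFun p := fun i => if h : ↑i < n then p.1 ⟨i, h⟩ else p.2 i (le_of_not_gt h)
  left_inv r := by
    funext i
    dsimp only
    split
    · simp [restr]
    · rfl
  right_inv p := by
    refine Prod.ext ?_ ?_
    · funext i
      have : (i : ℕ) < n := i.2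
      simp [restr, dif_pos this]
    · funext i h
      have : ¬ ((i : ℕ) < n) := not_lt.mpr h
      simp only [dif_neg this]

open Classical in
theorem sum_count {k c0 m : ℕ} {e : ℕ → ℕ} (hk : 2 ≤ k) (hm : 1 ≤ m)
    {n : ℕ} (hn : n ≤ m) (A : Set (Word k)) :
    ∑ σ : Seed k c0 m e, (A ∩ (mkTree hm σ).level n).ncard =
      Fintype.card ((i : Fin m) → n ≤ ↑i → Fin (e i) → Fin k) *
        Set.ncard {x ∈ A | x.length = c0 + ∑ i ∈ Finset.range n, (1 + e i)} := by
  have step1 : ∑ σ : Seed k c0 m e, (A ∩ (mkTree hm σ).level n).ncard =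
      ∑ σ : Seed k c0 m e, (Finset.univ.filter fun aa : Fin n → Fin k =>
        cw c0 e n (σ.1, restr n hn σ.2, aa) ∈ A).card :=
    Finset.sum_congr rfl fun σ _ => inter_ncard hk hm σ hn A
  rw [step1, ← cw_count n A]
  set H := fun (c : Fin c0 → Fin k) (r1 : (i : Fin n) → Fin (e i) → Fin k) =>
    (Finset.univ.filter fun aa : Fin n → Fin k => cw c0 e n (c, r1, aa) ∈ A).card with hH
  have step2 : ∑ σ : Seed k c0 m e, (Finset.univ.filter fun aa : Fin n → Fin k =>
        cw c0 e n (σ.1, restr n hn σ.2, aa) ∈ A).card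
      = ∑ c : Fin c0 → Fin k, ∑ r : (i : Fin m) → Fin (e i) → Fin k, H c (restr n hn r) :=
    Fintype.sum_prod_type _
  rw [step2]
  have step3 : ∀ c : Fin c0 → Fin k,
      ∑ r : (i : Fin m) → Fin (e i) → Fin k, H c (restr n hn r) =
        Fintype.card ((i : Fin m) → n ≤ ↑i → Fin (e i) → Fin k) *
          ∑ r1 : (i : Fin n) → Fin (e i) → Fin k, H c r1 := by
    intro c
    have := Equiv.sum_comp (restrEquiv (k := k) (e := e) n hn)
      (fun p : ((i : Fin n) → Fin (e i) → Fin k) × ((i : Fin m) → n ≤ ↑i → Fin (e i) → Fin k)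
        => H c p.1)
    have h2 : ∑ r : (i : Fin m) → Fin (e i) → Fin k, H c (restr n hn r) =
        ∑ p : ((i : Fin n) → Fin (e i) → Fin k) × ((i : Fin m) → n ≤ ↑i → Fin (e i) → Fin k),
          H c p.1 := this
    rw [h2, Fintype.sum_prod_type]
    simp only [Finset.sum_const, Finset.card_univ, smul_eq_mul]
    rw [Finset.mul_sum]
  simp only [step3, ← Finset.mul_sum]
  congr 1
  rw [Finset.card_filter]
  rw [Fintype.sum_prod_type]
  refine Finset.sum_congr rfl fun c _ => ?_
  rw [Fintype.sum_prod_type]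
  refine Finset.sum_congr rfl fun r1 _ => ?_
  simp only [hH]
  rw [Finset.card_filter]


theorem cards_eq {k c0 m : ℕ} {e : ℕ → ℕ} (n : ℕ) (hn : n ≤ m) :
    Fintype.card (Seed k c0 m e) * k ^ n =
      Fintype.card ((i : Fin m) → n ≤ ↑i → Fin (e i) → Fin k) *
        k ^ (c0 + ∑ i ∈ Finset.range n, (1 + e i)) := by
  rw [← card_core (k := k) (c0 := c0) (e := e) n]
  have hA : Fintype.card (Fin n → Fin k) = k ^ n := by
    simp [Fintype.card_fun]
  have h1 : Fintype.card ((i : Fin m) → Fin (e i) → Fin k) =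
      Fintype.card ((i : Fin n) → Fin (e i) → Fin k) *
        Fintype.card ((i : Fin m) → n ≤ ↑i → Fin (e i) → Fin k) := by
    rw [Fintype.card_congr (restrEquiv (k := k) (e := e) n hn), Fintype.card_prod]
  have h2 : Fintype.card (Seed k c0 m e) =
      Fintype.card (Fin c0 → Fin k) * Fintype.card ((i : Fin m) → Fin (e i) → Fin k) :=
    Fintype.card_prod _ _
  have h3 : Fintype.card (Core k c0 e n) =
      Fintype.card (Fin c0 → Fin k) * (Fintype.card ((i : Fin n) → Fin (e i) → Fin k) *
        Fintype.card (Fin n → Fin k)) := by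
    rw [Fintype.card_prod, Fintype.card_prod]
  rw [h2, h1, h3, hA]
  ring

open Classical in
theorem key {k : ℕ} (c0 m : ℕ) (hk : 2 ≤ k) (hm : 1 ≤ m) (e : ℕ → ℕ) (A : Set (Word k)) :
    ∃ W : CSTree k, W.dim = m ∧
      (∀ n ≤ m, W.levelLen n = c0 + ∑ i ∈ Finset.range n, (1 + e i)) ∧
      (∑ n ∈ Finset.range (m + 1),
          (Set.ncard {x ∈ A | x.length = c0 + ∑ i ∈ Finset.range n, (1 + e i)} : ℝ) /
            (k : ℝ) ^ (c0 + ∑ i ∈ Finset.range n, (1 + e i))) / (m + 1) ≤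
      (∑ n ∈ Finset.range (m + 1),
          (Set.ncard (A ∩ W.level n) : ℝ) / (Set.ncard (W.level n) : ℝ)) / (m + 1) := by
  haveI : NeZero k := ⟨by omega⟩
  have hk0 : (0 : ℝ) < (k : ℝ) := by
    have : 0 < k := by omega
    exact_mod_cast this
  have main : ∀ n, n ≤ m → ∑ σ : Seed k c0 m e,
      ((Set.ncard (A ∩ (mkTree hm σ).level n) : ℝ) / (Set.ncard ((mkTree hm σ).level n) : ℝ))
      = (Fintype.card (Seed k c0 m e) : ℝ) *
        ((Set.ncard {x ∈ A | x.length = c0 + ∑ i ∈ Finset.range n, (1 + e i)} : ℝ) /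
          (k : ℝ) ^ (c0 + ∑ i ∈ Finset.range n, (1 + e i))) := by
    intro n hn
    have h1 : ∑ σ : Seed k c0 m e,
        ((Set.ncard (A ∩ (mkTree hm σ).level n) : ℝ) / (Set.ncard ((mkTree hm σ).level n) : ℝ))
        = (∑ σ : Seed k c0 m e, (Set.ncard (A ∩ (mkTree hm σ).level n) : ℝ)) / (k : ℝ) ^ n := by
      rw [Finset.sum_div]
      refine Finset.sum_congr rfl fun σ _ => ?_
      rw [level_ncard hk hm σ hn]
      push_cast
      ring
    have h2 : (∑ σ : Seed k c0 m e, (Set.ncard (A ∩ (mkTree hm σ).level n) : ℝ))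
        = ((Fintype.card ((i : Fin m) → n ≤ ↑i → Fin (e i) → Fin k) : ℝ) *
            (Set.ncard {x ∈ A | x.length = c0 + ∑ i ∈ Finset.range n, (1 + e i)} : ℝ)) := by
      rw [← Nat.cast_sum]
      rw [sum_count hk hm hn A]
      push_cast
      ring
    rw [h1, h2]
    have hcards := cards_eq (k := k) (c0 := c0) (e := e) n hn
    have hcardsR : (Fintype.card (Seed k c0 m e) : ℝ) * (k : ℝ) ^ n
        = (Fintype.card ((i : Fin m) → n ≤ ↑i → Fin (e i) → Fin k) : ℝ) *
          (k : ℝ) ^ (c0 + ∑ i ∈ Finset.range n, (1 + e i)) := by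
      exact_mod_cast hcards
    have hp1 : (k : ℝ) ^ n ≠ 0 := ne_of_gt (pow_pos hk0 n)
    have hp2 : (k : ℝ) ^ (c0 + ∑ i ∈ Finset.range n, (1 + e i)) ≠ 0 :=
      ne_of_gt (pow_pos hk0 _)
    rw [← mul_div_assoc, div_eq_div_iff hp1 hp2]
    linear_combination (-(Set.ncard {x ∈ A | x.length = c0 + ∑ i ∈ Finset.range n, (1 + e i)} : ℝ)) * hcardsR
  -- global averaging
  set C : ℝ := (∑ n ∈ Finset.range (m + 1),
      (Set.ncard {x ∈ A | x.length = c0 + ∑ i ∈ Finset.range n, (1 + e i)} : ℝ) /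
        (k : ℝ) ^ (c0 + ∑ i ∈ Finset.range n, (1 + e i))) / (m + 1) with hC
  set F : Seed k c0 m e → ℝ := fun σ => (∑ n ∈ Finset.range (m + 1),
      (Set.ncard (A ∩ (mkTree hm σ).level n) : ℝ) /
        (Set.ncard ((mkTree hm σ).level n) : ℝ)) / (m + 1) with hF
  have hFsum : ∑ σ : Seed k c0 m e, F σ = (Fintype.card (Seed k c0 m e) : ℝ) * C := by
    rw [hF, ← Finset.sum_div]
    rw [Finset.sum_comm]
    have : ∀ n ∈ Finset.range (m + 1), ∑ σ : Seed k c0 m e,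
        ((Set.ncard (A ∩ (mkTree hm σ).level n) : ℝ) / (Set.ncard ((mkTree hm σ).level n) : ℝ))
        = (Fintype.card (Seed k c0 m e) : ℝ) *
          ((Set.ncard {x ∈ A | x.length = c0 + ∑ i ∈ Finset.range n, (1 + e i)} : ℝ) /
            (k : ℝ) ^ (c0 + ∑ i ∈ Finset.range n, (1 + e i))) := fun n hn =>
      main n (by have := Finset.mem_range.mp hn; omega)
    rw [Finset.sum_congr rfl this, ← Finset.mul_sum, hC, mul_div_assoc]
  have hle : ∑ σ : Seed k c0 m e, C ≤ ∑ σ : Seed k c0 m e, F σ := by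
    rw [hFsum, Finset.sum_const, Finset.card_univ, nsmul_eq_mul]
  haveI : Nonempty (Seed k c0 m e) := by
    haveI : Nonempty (Fin k) := ⟨⟨0, by omega⟩⟩
    infer_instance
  obtain ⟨σ, -, hσ⟩ := Finset.exists_le_of_sum_le Finset.univ_nonempty hle
  exact ⟨mkTree hm σ, rfl, fun n hn => mkTree_levelLen hm σ hn, hσ⟩

end CSAux

/-- Lemma 7.7 (second part): for every finite `L ⊆ ℕ` with `|L| ≥ 2` and every
`A ⊆ [k]^{<ℕ}` there is a Carlson–Simpson tree `W` of dimension `|L| - 1` with level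
set `L` such that `d^W_FW(A) ≥ d_L(A)`. -/
theorem exists_cs_tree_fw_dens (k : ℕ) (hk : 2 ≤ k) (L : Finset ℕ) (hL : 2 ≤ L.card)
    (A : Set (Word k)) :
    ∃ W : CSTree k, W.dim = L.card - 1 ∧ W.levelSet = L ∧ genFwDens k L A ≤ fwDens W A := by
  classical
  set m := L.card - 1 with hm'
  have hm : 1 ≤ m := by omega
  have hcard : L.card = m + 1 := by omega
  set ℓ : Fin (m + 1) ↪o ℕ := L.orderEmbOfFin hcard with hℓ
  set ℓ' : ℕ → ℕ := fun n => if h : n < m + 1 then ℓ ⟨n, h⟩ else 0 with hℓ'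
  set e : ℕ → ℕ := fun i => ℓ' (i + 1) - ℓ' i - 1 with he
  have hℓval : ∀ (n : ℕ) (h : n < m + 1), ℓ' n = ℓ ⟨n, h⟩ := by
    intro n h
    show (fun n => if h : n < m + 1 then ℓ ⟨n, h⟩ else 0) n = ℓ ⟨n, h⟩
    simp only []
    rw [dif_pos h]
  have hmono : ∀ n, n < m → ℓ' n < ℓ' (n + 1) := by
    intro n hn
    rw [hℓval n (by omega), hℓval (n + 1) (by omega)]
    exact ℓ.strictMono (by simp [Fin.lt_def])
  have hN : ∀ n, n ≤ m → ℓ' 0 + ∑ i ∈ Finset.range n, (1 + e i) = ℓ' n := by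
    intro n hn
    induction n with
    | zero => simp
    | succ n ih =>
      have h1 := ih (by omega)
      have h2 := hmono n (by omega)
      have h3 : e n = ℓ' (n + 1) - ℓ' n - 1 := rfl
      rw [Finset.sum_range_succ]
      omega
  obtain ⟨W, hdim, hlen, hle⟩ := CSAux.key (ℓ' 0) m hk hm e A
  have hlevelLen : ∀ n, n ≤ m → W.levelLen n = ℓ' n := fun n hn => by
    rw [hlen n hn, hN n hn]
  have hLimg : Finset.image ℓ' (Finset.range (m + 1)) = L := by
    apply Finset.ext
    intro x
    simp only [Finset.mem_image, Finset.mem_range]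
    constructor
    · rintro ⟨n, hn, rfl⟩
      rw [hℓval n hn]
      exact Finset.orderEmbOfFin_mem L hcard ⟨n, hn⟩
    · intro hx
      have h2 : x ∈ Set.range ⇑ℓ := by
        rw [hℓ, Finset.range_orderEmbOfFin]
        exact hx
      obtain ⟨i, hi⟩ := h2
      refine ⟨i.1, i.2, ?_⟩
      rw [hℓval i.1 i.2, ← hi]
  have hinj : ∀ x ∈ Finset.range (m + 1), ∀ y ∈ Finset.range (m + 1), ℓ' x = ℓ' y → x = y := by
    intro x hx y hy hxy
    rw [Finset.mem_range] at hx hy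
    rw [hℓval x hx, hℓval y hy] at hxy
    have := ℓ.injective hxy
    exact congrArg Fin.val this
  refine ⟨W, hdim, ?_, ?_⟩
  · unfold CSTree.levelSet
    rw [hdim, ← hLimg]
    apply Finset.image_congr
    intro n hn
    simp only [Finset.coe_range, Set.mem_Iio] at hn
    exact hlevelLen n (by omega)
  · unfold genFwDens fwDens
    rw [hdim, hcard, ← hLimg, Finset.sum_image hinj]
    have hrw : ∑ n ∈ Finset.range (m + 1),
        (Set.ncard {x ∈ A | x.length = ℓ' n} : ℝ) / (k : ℝ) ^ (ℓ' n)
        = ∑ n ∈ Finset.range (m + 1),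
          (Set.ncard {x ∈ A | x.length = ℓ' 0 + ∑ i ∈ Finset.range n, (1 + e i)} : ℝ) /
            (k : ℝ) ^ (ℓ' 0 + ∑ i ∈ Finset.range n, (1 + e i)) := by
      refine Finset.sum_congr rfl fun n hn => ?_
      rw [hN n (by have := Finset.mem_range.mp hn; omega)]
    rw [hrw]
    push_cast
    exact hle
end
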